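/- arXiv:1004.4127 — 8 statements merged into one kernel-verified Lean document; each statement's English description precedes it below -/
import Mathlib

section
/- Let Γ be a graph with at least 7 vertices and at least 5 vertices of degree ≥ 6, and let v ≡ 0 or 3 (mod 4). Then every (K_v,Γ)-design can be down-linked to a (K_{v-3},P₃)-design. -/
open SimpleGraph

/-- The complete graph on the set `s` of natural numbers, viewed as a graph on `ℕ`. -/
def Kon (s : Set ℕ) : SimpleGraph ℕ where
  Adj x y := x ≠ y ∧ x ∈ s ∧ y ∈ s
  symm := ⟨fun x y ⟨h, hx, hy⟩ => ⟨h.symm, hy, hx⟩⟩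
  loopless := ⟨fun x h => h.1 rfl⟩

/-- `B` is a copy of `Γ`: there is an injection of vertices under which the
edges of `B` are exactly the images of the edges of `Γ`. -/
def IsCopy {α β : Type*} (Γ : SimpleGraph α) (B : SimpleGraph β) : Prop :=
  ∃ φ : α ↪ β, ∀ x y : β, B.Adj x y ↔ ∃ a b, Γ.Adj a b ∧ φ a = x ∧ φ b = y

/-- A `(G, Γ)`-design: a set of copies of `Γ`, each a subgraph of `G` with
nonempty edge set, whose edge sets partition the edge set of `G`. -/
def IsDesign {α β : Type*} (G : SimpleGraph β) (Γ : SimpleGraph α)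
    (D : Set (SimpleGraph β)) : Prop :=
  (∀ B ∈ D, B ≤ G ∧ IsCopy Γ B ∧ B.edgeSet.Nonempty) ∧
  ∀ e ∈ G.edgeSet, ∃! B, B ∈ D ∧ e ∈ B.edgeSet

/-- A down-link from the design `D` to the design `D'`: each block is mapped
to a subgraph of itself. -/
def IsDownlink {β : Type*} (D D' : Set (SimpleGraph β))
    (f : SimpleGraph β → SimpleGraph β) : Prop :=
  ∀ B ∈ D, f B ∈ D' ∧ f B ≤ B

namespace DL7

/-- A finset of edges that can be partitioned into pairs of adjacent
(vertex-sharing), non-diagonal edges. -/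
inductive Pairable : Finset (Sym2 ℕ) → Prop
  | empty : Pairable ∅
  | cons (e f : Sym2 ℕ) (E : Finset (Sym2 ℕ)) (he : e ∉ insert f E) (hf : f ∉ E)
      (hshare : ∃ c, c ∈ e ∧ c ∈ f) (hde : ¬ e.IsDiag) (hdf : ¬ f.IsDiag)
      (hE : Pairable E) : Pairable (insert e (insert f E))

lemma sym2_repr (z : Sym2 ℕ) : ∃ x y, z = s(x, y) := by
  induction z using Sym2.ind with
  | _ x y => exact ⟨x, y, rfl⟩

/-- Hub lemma: a finset of non-diagonal edges of even cardinality containing,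
for each endpoint `x ≠ h` of each of its edges, the edge `s(h,x)`, is pairable. -/
lemma pairable_hub (h : ℕ) :
    ∀ N (E : Finset (Sym2 ℕ)), E.card ≤ N →
      (∀ e ∈ E, ¬ e.IsDiag) → Even E.card →
      (∀ e ∈ E, ∀ x, x ∈ e → x ≠ h → s(h, x) ∈ E) → Pairable E := by
  intro N
  induction N with
  | zero =>
    intro E hcard _ _ _
    have : E = ∅ := Finset.card_eq_zero.mp (Nat.le_zero.mp hcard)
    rw [this]; exact Pairable.empty
  | succ N ih =>
    intro E hcard hdiag heven hhub
    rcases Finset.eq_empty_or_nonempty E with rfl | hne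
    · exact Pairable.empty
    have hE2 : 2 ≤ E.card := by
      rcases Nat.even_iff.mp heven with h2
      have h0 : E.card ≠ 0 := by
        simpa [Finset.card_eq_zero] using hne.ne_empty
      omega
    -- helper to finish once we have a suitable pair e,f
    have finish : ∀ e f : Sym2 ℕ, e ∈ E → f ∈ E → e ≠ f →
        (∃ c, c ∈ e ∧ c ∈ f) →
        (∀ g ∈ E \ {e, f}, ∀ x, x ∈ g → x ≠ h → s(h, x) ∈ E \ {e, f}) →
        Pairable E := by
      intro e f heE hfE hef hshare hhub'
      set E' := E \ {e, f} with hE'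
      have hsub : ({e, f} : Finset (Sym2 ℕ)) ⊆ E := by
        intro g hg; rcases Finset.mem_insert.mp hg with rfl | hg
        · exact heE
        · rcases Finset.mem_singleton.mp hg with rfl; exact hfE
      have hcard2 : ({e, f} : Finset (Sym2 ℕ)).card = 2 := by
        rw [Finset.card_insert_of_notMem (by simpa using hef), Finset.card_singleton]
      have hcard' : E'.card = E.card - 2 := by
        rw [hE', Finset.card_sdiff_of_subset hsub, hcard2]
      have hrepr : E = insert e (insert f E') := by
        ext g
        simp only [hE', Finset.mem_insert, Finset.mem_sdiff, Finset.mem_singleton]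
        constructor
        · intro hg
          by_cases h1 : g = e
          · exact Or.inl h1
          by_cases h2 : g = f
          · exact Or.inr (Or.inl h2)
          · exact Or.inr (Or.inr ⟨hg, by push_neg; exact ⟨h1, h2⟩⟩)
        · rintro (rfl | rfl | ⟨hg, -⟩) <;> [exact heE; exact hfE; exact hg]
      have hpair' : Pairable E' := by
        apply ih E' (by omega)
        · intro g hg; exact hdiag g (Finset.mem_sdiff.mp hg).1
        · rw [hcard']
          rcases Nat.even_iff.mp heven with h2
          rw [Nat.even_iff]; omega
        · exact hhub'
      rw [hrepr]
      refine Pairable.cons e f E' ?_ ?_ hshare (hdiag e heE) (hdiag f hfE) hpair'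
      · simp only [Finset.mem_insert, hE', Finset.mem_sdiff, Finset.mem_singleton]
        push_neg
        exact ⟨hef, fun _ => by simp⟩
      · simp only [hE', Finset.mem_sdiff, Finset.mem_singleton]
        push_neg
        exact fun _ => by simp
    by_cases hA : ∃ e ∈ E, ∃ g ∈ E, e ≠ g ∧ h ∉ e ∧ h ∉ g ∧ ∃ c, c ∈ e ∧ c ∈ g
    · obtain ⟨e, heE, g, hgE, hef, hhe, hhg, hshare⟩ := hA
      apply finish e g heE hgE hef hshare
      intro g' hg' x hx hxh
      have hw : s(h, x) ∈ E := hhub g' (Finset.mem_sdiff.mp hg').1 x hx hxh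
      refine Finset.mem_sdiff.mpr ⟨hw, ?_⟩
      simp only [Finset.mem_insert, Finset.mem_singleton]
      push_neg
      constructor
      · rintro rfl; exact hhe (by simp)
      · rintro rfl; exact hhg (by simp)
    · by_cases hM : ∃ e ∈ E, h ∉ e
      · obtain ⟨e, heE, hhe⟩ := hM
        obtain ⟨x, y, rfl⟩ := sym2_repr e
        have hxy : x ≠ y := by
          intro hxyeq; exact hdiag _ heE (by simp [Sym2.mk_isDiag_iff, hxyeq])
        have hxh : x ≠ h := by rintro rfl; exact hhe (by simp)
        have hyh : y ≠ h := by rintro rfl; exact hhe (by simp)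
        set f := s(h, x) with hfdef
        have hfE : f ∈ E := hhub _ heE x (by simp) hxh
        have hef : s(x, y) ≠ f := by
          intro hcontra
          apply hhe; rw [hcontra]; simp [hfdef]
        apply finish _ f heE hfE hef ⟨x, by simp, by simp [hfdef]⟩
        intro g hg z hz hzh
        obtain ⟨hgE, hgnm⟩ := Finset.mem_sdiff.mp hg
        simp only [Finset.mem_insert, Finset.mem_singleton] at hgnm
        push_neg at hgnm
        have hw : s(h, z) ∈ E := hhub g hgE z hz hzh
        refine Finset.mem_sdiff.mpr ⟨hw, ?_⟩
        simp only [Finset.mem_insert, Finset.mem_singleton]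
        push_neg
        constructor
        · intro hcontra
          have : h ∈ s(x, y) := by rw [← hcontra]; simp
          simp only [Sym2.mem_iff] at this
          rcases this with rfl | rfl
          · exact hxh rfl
          · exact hyh rfl
        · -- s(h,z) = f = s(h,x) would give z = x, leading to contradiction with ¬hA
          intro hcontra
          rw [hfdef] at hcontra
          have hzx : z = x := by
            rcases Sym2.eq_iff.mp hcontra with ⟨-, hzx⟩ | ⟨hhx, -⟩
            · exact hzx
            · exact absurd hhx.symm hxh
          subst hzx
          by_cases hhg : h ∈ g
          · have : g = s(h, z) := (Sym2.mem_and_mem_iff (Ne.symm hzh)).mp ⟨hhg, hz⟩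
            exact hgnm.2 (by rw [this, hfdef])
          · exact hA ⟨_, heE, g, hgE, Ne.symm hgnm.1, hhe, hhg, z, by simp, hz⟩
      · -- all edges contain h
        push_neg at hM
        obtain ⟨e, heE, f, hfE, hef⟩ := Finset.one_lt_card.mp (show 1 < E.card by omega)
        apply finish e f heE hfE hef ⟨h, hM e heE, hM f hfE⟩
        intro g hg z hz hzh
        obtain ⟨hgE, hgnm⟩ := Finset.mem_sdiff.mp hg
        have hhg : h ∈ g := hM g hgE
        have hgz : g = s(h, z) := (Sym2.mem_and_mem_iff (Ne.symm hzh)).mp ⟨hhg, hz⟩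
        rw [← hgz]
        exact hg


/-- Extract from a pairable finset a partition into adjacent pairs. -/
lemma pairable_parts {E : Finset (Sym2 ℕ)} (hE : Pairable E) :
    ∃ P : Set (Finset (Sym2 ℕ)),
      (∀ p ∈ P, ∃ c x y : ℕ, c ≠ x ∧ c ≠ y ∧ x ≠ y ∧ p = {s(c, x), s(c, y)}) ∧
      (∀ g ∈ E, ∃ p ∈ P, g ∈ p) ∧
      (∀ p ∈ P, ∀ g ∈ p, g ∈ E) ∧
      (∀ p ∈ P, ∀ q ∈ P, p ≠ q → ∀ g, g ∈ p → g ∉ q) := by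
  induction hE with
  | empty => exact ⟨∅, by simp, by simp, by simp, by simp⟩
  | cons e f E he hf hshare hde hdf hE ih =>
    obtain ⟨P, hshape, hcover, hsub, hdisj⟩ := ih
    have hef : e ≠ f := fun hc => he (by simp [hc])
    have heE : e ∉ E := fun hc => he (by simp [hc])
    obtain ⟨c, hce, hcf⟩ := hshare
    obtain ⟨x, hex⟩ := Sym2.mem_iff_exists.mp hce
    obtain ⟨y, hfy⟩ := Sym2.mem_iff_exists.mp hcf
    have hcx : c ≠ x := fun hc => hde (by rw [hex]; simp [Sym2.mk_isDiag_iff, hc])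
    have hcy : c ≠ y := fun hc => hdf (by rw [hfy]; simp [Sym2.mk_isDiag_iff, hc])
    have hxy : x ≠ y := fun hc => hef (by rw [hex, hfy, hc])
    refine ⟨P ∪ {({e, f} : Finset (Sym2 ℕ))}, ?_, ?_, ?_, ?_⟩
    · rintro p (hp | hp)
      · exact hshape p hp
      · rcases hp with rfl
        exact ⟨c, x, y, hcx, hcy, hxy, by rw [hex, hfy]⟩
    · intro g hg
      rcases Finset.mem_insert.mp hg with rfl | hg
      · exact ⟨{g, f}, Or.inr rfl, by simp⟩
      rcases Finset.mem_insert.mp hg with rfl | hg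
      · exact ⟨{e, g}, Or.inr rfl, by simp⟩
      · obtain ⟨p, hp, hgp⟩ := hcover g hg
        exact ⟨p, Or.inl hp, hgp⟩
    · rintro p (hp | hp) g hg
      · exact Finset.mem_insert.mpr (Or.inr (Finset.mem_insert.mpr (Or.inr (hsub p hp g hg))))
      · rcases hp with rfl
        rcases Finset.mem_insert.mp hg with rfl | hg
        · simp
        · rcases Finset.mem_singleton.mp hg with rfl; simp
    · rintro p (hp | hp) q (hq | hq) hpq g hgp hgq
      · exact hdisj p hp q hq hpq g hgp hgq
      · rcases hq with rfl
        have hgE : g ∈ E := hsub p hp g hgp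
        rcases Finset.mem_insert.mp hgq with rfl | hgq
        · exact heE hgE
        · rcases Finset.mem_singleton.mp hgq with rfl; exact hf hgE
      · rcases hp with rfl
        have hgE : g ∈ E := hsub q hq g hgq
        rcases Finset.mem_insert.mp hgp with rfl | hgp
        · exact heE hgE
        · rcases Finset.mem_singleton.mp hgp with rfl; exact hf hgE
      · rcases hp with rfl; rcases hq with rfl; exact hpq rfl

/-- The edge set of the complete graph on `{0, ..., n-1}` as a finset. -/
def EK : ℕ → Finset (Sym2 ℕ)
  | 0 => ∅
  | n + 1 => EK n ∪ (Finset.range n).image (fun x => s(x, n))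

lemma mem_EK {n : ℕ} {e : Sym2 ℕ} :
    e ∈ EK n ↔ ∃ x y, x < y ∧ y < n ∧ e = s(x, y) := by
  induction n with
  | zero => simp [EK]
  | succ n ih =>
    simp only [EK, Finset.mem_union, Finset.mem_image, Finset.mem_range, ih]
    constructor
    · rintro (⟨x, y, h1, h2, rfl⟩ | ⟨x, hx, rfl⟩)
      · exact ⟨x, y, h1, by omega, rfl⟩
      · exact ⟨x, n, hx, by omega, rfl⟩
    · rintro ⟨x, y, h1, h2, rfl⟩
      rcases Nat.lt_succ_iff_lt_or_eq.mp h2 with h2 | rfl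
      · exact Or.inl ⟨x, y, h1, h2, rfl⟩
      · exact Or.inr ⟨x, h1, rfl⟩

lemma mem_EK_of {n x y : ℕ} (hxy : x ≠ y) (hx : x < n) (hy : y < n) :
    s(x, y) ∈ EK n := by
  rcases Nat.lt_or_ge x y with h | h
  · exact mem_EK.mpr ⟨x, y, h, hy, rfl⟩
  · have : y < x := by omega
    exact mem_EK.mpr ⟨y, x, this, hx, Sym2.eq_swap⟩

lemma EK_lt {n : ℕ} {e : Sym2 ℕ} (he : e ∈ EK n) : ∀ z ∈ e, z < n := by
  obtain ⟨x, y, h1, h2, rfl⟩ := mem_EK.mp he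
  intro z hz
  rcases Sym2.mem_iff.mp hz with rfl | rfl <;> omega

lemma EK_not_diag {n : ℕ} {e : Sym2 ℕ} (he : e ∈ EK n) : ¬ e.IsDiag := by
  obtain ⟨x, y, h1, h2, rfl⟩ := mem_EK.mp he
  simp only [Sym2.mk_isDiag_iff]
  omega

lemma card_EK (n : ℕ) : (EK n).card = n.choose 2 := by
  induction n with
  | zero => simp [EK]
  | succ n ih =>
    have hdisj : Disjoint (EK n) ((Finset.range n).image (fun x => s(x, n))) := by
      rw [Finset.disjoint_right]
      rintro e he hin
      obtain ⟨x, hx, rfl⟩ := Finset.mem_image.mp he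
      have := EK_lt hin n (by simp)
      omega
    have hinj : Set.InjOn (fun x => s(x, n)) (Finset.range n) := by
      intro a _ b _ hab
      rcases Sym2.eq_iff.mp hab with ⟨h1, -⟩ | ⟨h1, h2⟩
      · exact h1
      · rw [h1, ← h2]
    rw [EK, Finset.card_union_of_disjoint hdisj, ih, Finset.card_image_of_injOn hinj,
      Finset.card_range]
    have hrec : (n + 1).choose 2 = n.choose 1 + n.choose 2 := Nat.choose_succ_succ n 1
    rw [hrec, Nat.choose_one_right]
    omega

lemma even_choose2 {n : ℕ} (h : n % 4 = 0 ∨ n % 4 = 1) : Even (n.choose 2) := by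
  rw [Nat.choose_two_right]
  obtain ⟨q, hq⟩ : ∃ q, n = 4 * q ∨ n = 4 * q + 1 := by
    refine ⟨n / 4, ?_⟩
    have := Nat.div_add_mod n 4
    omega
  rcases hq with rfl | rfl
  · have h1 : 4 * q * (4 * q - 1) = 2 * (2 * q * (4 * q - 1)) := by ring
    rw [h1, Nat.mul_div_cancel_left _ (by norm_num)]
    exact ⟨q * (4 * q - 1), by ring⟩
  · have h2 : 4 * q + 1 - 1 = 4 * q := by omega
    rw [h2]
    have h1 : (4 * q + 1) * (4 * q) = 2 * ((4 * q + 1) * (2 * q)) := by ring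
    rw [h1, Nat.mul_div_cancel_left _ (by norm_num)]
    exact ⟨(4 * q + 1) * q, by ring⟩


/-- The cherry (path with 2 edges) with center `c` and leaves `x`, `y`. -/
def cherryG (c x y : ℕ) : SimpleGraph ℕ :=
  SimpleGraph.fromEdgeSet {s(c, x), s(c, y)}

lemma cherryG_adj {c x y u w : ℕ} :
    (cherryG c x y).Adj u w ↔ (s(u, w) = s(c, x) ∨ s(u, w) = s(c, y)) ∧ u ≠ w := by
  simp [cherryG, fromEdgeSet_adj]

lemma cherryG_edgeSet {c x y : ℕ} (hcx : c ≠ x) (hcy : c ≠ y) :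
    (cherryG c x y).edgeSet = {s(c, x), s(c, y)} := by
  rw [cherryG, edgeSet_fromEdgeSet]
  ext e
  simp only [Set.mem_diff, Set.mem_insert_iff, Set.mem_singleton_iff, Set.mem_setOf_eq]
  constructor
  · exact fun h => h.1
  · rintro (rfl | rfl)
    · exact ⟨Or.inl rfl, by simp [Sym2.mk_isDiag_iff, hcx]⟩
    · exact ⟨Or.inr rfl, by simp [Sym2.mk_isDiag_iff, hcy]⟩

lemma path3_adj_01 : (pathGraph 3).Adj 0 1 := by rw [pathGraph_adj]; simp
lemma path3_adj_12 : (pathGraph 3).Adj 1 2 := by rw [pathGraph_adj]; simp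

lemma cherryG_isCopy {c x y : ℕ} (hcx : c ≠ x) (hcy : c ≠ y) (hxy : x ≠ y) :
    IsCopy (pathGraph 3) (cherryG c x y) := by
  have hinj : Function.Injective (fun i : Fin 3 => if i = 0 then x else if i = 1 then c else y) := by
    intro i j hij
    fin_cases i <;> fin_cases j <;> simp_all <;>
      first
      | rfl
      | (exfalso; first
          | exact hcx hij.symm
          | exact hcx hij
          | exact hcy hij.symm
          | exact hcy hij
          | exact hxy hij
          | exact hxy hij.symm)
  refine ⟨⟨fun i => if i = 0 then x else if i = 1 then c else y, hinj⟩, ?_⟩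
  intro u w
  rw [cherryG_adj]
  constructor
  · rintro ⟨h | h, hne⟩
    · rcases Sym2.eq_iff.mp h with ⟨rfl, rfl⟩ | ⟨rfl, rfl⟩
      · exact ⟨1, 0, path3_adj_01.symm, by simp, by simp⟩
      · exact ⟨0, 1, path3_adj_01, by simp, by simp⟩
    · rcases Sym2.eq_iff.mp h with ⟨rfl, rfl⟩ | ⟨rfl, rfl⟩
      · exact ⟨1, 2, path3_adj_12, by simp, by simp⟩
      · exact ⟨2, 1, path3_adj_12.symm, by simp, by simp⟩
  · rintro ⟨i, j, hadj, rfl, rfl⟩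
    rw [pathGraph_adj] at hadj
    fin_cases i <;> fin_cases j
    · exact absurd hadj (by decide)
    · exact ⟨Or.inl Sym2.eq_swap, fun h => hcx h.symm⟩
    · exact absurd hadj (by decide)
    · exact ⟨Or.inl rfl, hcx⟩
    · exact absurd hadj (by decide)
    · exact ⟨Or.inr rfl, hcy⟩
    · exact absurd hadj (by decide)
    · exact ⟨Or.inr Sym2.eq_swap, fun h => hcy h.symm⟩
    · exact absurd hadj (by decide)

lemma cherryG_nonempty {c x y : ℕ} (hcx : c ≠ x) (hcy : c ≠ y) :
    (cherryG c x y).edgeSet.Nonempty := by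
  rw [cherryG_edgeSet hcx hcy]
  exact ⟨s(c, x), Or.inl rfl⟩

end DL7

open DL7 Finset

/-- If `Γ` has at least 7 vertices and at least 5 vertices of degree ≥ 6 and
`v ≡ 0, 3 (mod 4)`, then every `(K_v,Γ)`-design can be down-linked to a
`(K_{v-3},P₃)`-design. -/
theorem stmt7 {α : Type*} [Fintype α] [DecidableEq α] (Γ : SimpleGraph α)
    [DecidableRel Γ.Adj] (hcard : 7 ≤ Fintype.card α)
    (hdeg : 5 ≤ (Finset.univ.filter fun a => 6 ≤ Γ.degree a).card)
    (v : ℕ) (hv : v % 4 = 0 ∨ v % 4 = 3)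
    (D : Set (SimpleGraph ℕ)) (hD : IsDesign (Kon (Set.Iio v)) Γ D) :
    ∃ D' : Set (SimpleGraph ℕ),
      IsDesign (Kon (Set.Iio (v - 3))) (pathGraph 3) D' ∧
      ∃ f, IsDownlink D D' f := by
  classical
  rcases Set.eq_empty_or_nonempty D with rfl | ⟨B₀, hB₀⟩
  · -- The design is empty, so `K_v` has no edges and `v ≤ 1`.
    have hv1 : v ≤ 1 := by
      by_contra h
      push_neg at h
      have hedge : s(0, 1) ∈ (Kon (Set.Iio v)).edgeSet := by
        rw [SimpleGraph.mem_edgeSet]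
        exact ⟨by norm_num, Set.mem_Iio.mpr (by omega), Set.mem_Iio.mpr (by omega)⟩
      obtain ⟨B, ⟨hB, -⟩, -⟩ := hD.2 _ hedge
      exact hB
    refine ⟨∅, ⟨by simp, ?_⟩, fun _ => ⊥, by simp [IsDownlink]⟩
    intro e he
    exfalso
    obtain ⟨x, y, rfl⟩ := sym2_repr e
    rw [SimpleGraph.mem_edgeSet] at he
    have hx := Set.mem_Iio.mp he.2.1
    omega
  · -- Main case.
    have key : ∀ B ∈ D, ∃ φ : α ↪ ℕ,
        (∀ i j, Γ.Adj i j → B.Adj (φ i) (φ j)) ∧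
        (∀ i j, Γ.Adj i j → φ i < v ∧ φ j < v) := by
      intro B hB
      obtain ⟨hle, ⟨φ, hφ⟩, -⟩ := hD.1 B hB
      refine ⟨φ, fun i j hij => (hφ _ _).mpr ⟨i, j, hij, rfl, rfl⟩, ?_⟩
      intro i j hij
      have hadj := (hφ (φ i) (φ j)).mpr ⟨i, j, hij, rfl, rfl⟩
      have h2 := hle hadj
      exact ⟨Set.mem_Iio.mp h2.2.1, Set.mem_Iio.mp h2.2.2⟩
    have hHD : 0 < (Finset.univ.filter fun a => 6 ≤ Γ.degree a).card := by omega
    have h7 : 7 ≤ v := by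
      obtain ⟨φ, hadjB, hltB⟩ := key B₀ hB₀
      obtain ⟨i₀, hi₀⟩ := Finset.card_pos.mp hHD
      rw [Finset.mem_filter] at hi₀
      have hdeg₀ : 6 ≤ (Γ.neighborFinset i₀).card := by
        rw [SimpleGraph.card_neighborFinset_eq_degree]; exact hi₀.2
      set T := (Γ.neighborFinset i₀).image φ with hT
      have hTcard : 6 ≤ T.card := by
        rw [hT, Finset.card_image_of_injective _ φ.injective]; exact hdeg₀
      have hsub : insert (φ i₀) T ⊆ Finset.range v := by
        intro z hz
        rcases Finset.mem_insert.mp hz with rfl | hz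
        · obtain ⟨j, hj⟩ := Finset.card_pos.mp (by omega : 0 < (Γ.neighborFinset i₀).card)
          exact Finset.mem_range.mpr (hltB i₀ j ((Γ.mem_neighborFinset _ _).mp hj)).1
        · obtain ⟨j, hj, rfl⟩ := Finset.mem_image.mp hz
          exact Finset.mem_range.mpr (hltB i₀ j ((Γ.mem_neighborFinset _ _).mp hj)).2
      have hnm : φ i₀ ∉ T := by
        intro hmem
        obtain ⟨j, hj, hj2⟩ := Finset.mem_image.mp hmem
        rw [φ.injective hj2] at hj
        exact Γ.irrefl ((Γ.mem_neighborFinset _ _).mp hj)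
      have hc := Finset.card_le_card hsub
      rw [Finset.card_insert_of_notMem hnm, Finset.card_range] at hc
      omega
    set n := v - 3 with hn
    have hn4 : 4 ≤ n := by omega
    -- choose a good cherry inside each block, avoiding vertex 0
    have hgood : ∀ B ∈ D, ∃ γ a b : ℕ, γ < n ∧ γ ≠ 0 ∧ a < n ∧ a ≠ 0 ∧ b < n ∧ b ≠ 0 ∧
        a ≠ b ∧ B.Adj γ a ∧ B.Adj γ b := by
      intro B hB
      obtain ⟨φ, hadjB, hltB⟩ := key B hB
      set bad : Finset ℕ := {0, v - 3, v - 2, v - 1} with hbad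
      have hbadcard : bad.card ≤ 4 := by
        rw [hbad]
        have h1 := Finset.card_insert_le (0 : ℕ) ({v - 3, v - 2, v - 1} : Finset ℕ)
        have h2 := Finset.card_insert_le (v - 3) ({v - 2, v - 1} : Finset ℕ)
        have h3 := Finset.card_insert_le (v - 2) ({v - 1} : Finset ℕ)
        have h4 : ({v - 1} : Finset ℕ).card = 1 := Finset.card_singleton _
        omega
      have hnotbad : ∀ z : ℕ, z < v → z ∉ bad → z < n ∧ z ≠ 0 := by
        intro z hzv hzb
        rw [hbad] at hzb
        simp only [Finset.mem_insert, Finset.mem_singleton] at hzb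
        push_neg at hzb
        refine ⟨by omega, hzb.1⟩
      set S := (Finset.univ.filter fun a => 6 ≤ Γ.degree a).image φ with hS
      have hScard : 5 ≤ S.card := by
        rw [hS, Finset.card_image_of_injective _ φ.injective]; exact hdeg
      have hS1 : 0 < (S \ bad).card := by
        have := Finset.le_card_sdiff bad S
        omega
      obtain ⟨γ, hγ⟩ := Finset.card_pos.mp hS1
      rw [Finset.mem_sdiff] at hγ
      obtain ⟨i₀, hi₀, rfl⟩ := Finset.mem_image.mp hγ.1
      rw [Finset.mem_filter] at hi₀
      have hdeg₀ : 6 ≤ (Γ.neighborFinset i₀).card := by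
        rw [SimpleGraph.card_neighborFinset_eq_degree]; exact hi₀.2
      have hγv : φ i₀ < v := by
        obtain ⟨j, hj⟩ := Finset.card_pos.mp (by omega : 0 < (Γ.neighborFinset i₀).card)
        exact (hltB i₀ j ((Γ.mem_neighborFinset _ _).mp hj)).1
      obtain ⟨hγn, hγ0⟩ := hnotbad _ hγv hγ.2
      set T := (Γ.neighborFinset i₀).image φ with hT
      have hTcard : 6 ≤ T.card := by
        rw [hT, Finset.card_image_of_injective _ φ.injective]; exact hdeg₀
      have hT2 : 1 < (T \ bad).card := by
        have := Finset.le_card_sdiff bad T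
        omega
      obtain ⟨a, ha, b, hb, hab⟩ := Finset.one_lt_card.mp hT2
      rw [Finset.mem_sdiff] at ha hb
      obtain ⟨ja, hja, rfl⟩ := Finset.mem_image.mp ha.1
      obtain ⟨jb, hjb, rfl⟩ := Finset.mem_image.mp hb.1
      have hadja : Γ.Adj i₀ ja := (Γ.mem_neighborFinset _ _).mp hja
      have hadjb : Γ.Adj i₀ jb := (Γ.mem_neighborFinset _ _).mp hjb
      obtain ⟨han, ha0⟩ := hnotbad _ (hltB i₀ ja hadja).2 ha.2
      obtain ⟨hbn, hb0⟩ := hnotbad _ (hltB i₀ jb hadjb).2 hb.2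
      exact ⟨φ i₀, φ ja, φ jb, hγn, hγ0, han, ha0, hbn, hb0, hab,
        hadjB _ _ hadja, hadjB _ _ hadjb⟩
    choose γf af bf hf using hgood
    have h_gn : ∀ B (hB : B ∈ D), γf B hB < n := fun B hB => (hf B hB).1
    have h_g0 : ∀ B (hB : B ∈ D), γf B hB ≠ 0 := fun B hB => (hf B hB).2.1
    have h_an : ∀ B (hB : B ∈ D), af B hB < n := fun B hB => (hf B hB).2.2.1
    have h_a0 : ∀ B (hB : B ∈ D), af B hB ≠ 0 := fun B hB => (hf B hB).2.2.2.1
    have h_bn : ∀ B (hB : B ∈ D), bf B hB < n := fun B hB => (hf B hB).2.2.2.2.1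
    have h_b0 : ∀ B (hB : B ∈ D), bf B hB ≠ 0 := fun B hB => (hf B hB).2.2.2.2.2.1
    have h_ab : ∀ B (hB : B ∈ D), af B hB ≠ bf B hB := fun B hB => (hf B hB).2.2.2.2.2.2.1
    have hadj_a : ∀ (B : SimpleGraph ℕ) (hB : B ∈ D), B.Adj (γf B hB) (af B hB) := fun B hB => (hf B hB).2.2.2.2.2.2.2.1
    have hadj_b : ∀ (B : SimpleGraph ℕ) (hB : B ∈ D), B.Adj (γf B hB) (bf B hB) := fun B hB => (hf B hB).2.2.2.2.2.2.2.2
    have hne_ga : ∀ B (hB : B ∈ D), γf B hB ≠ af B hB := fun B hB => (hadj_a B hB).ne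
    have hne_gb : ∀ B (hB : B ∈ D), γf B hB ≠ bf B hB := fun B hB => (hadj_b B hB).ne
    -- distinct blocks are edge-disjoint
    have huniq : ∀ (e : Sym2 ℕ) B₁ B₂, B₁ ∈ D → B₂ ∈ D →
        e ∈ B₁.edgeSet → e ∈ B₂.edgeSet → B₁ = B₂ := by
      intro e B₁ B₂ h1 h2 he1 he2
      have hev : e ∈ (Kon (Set.Iio v)).edgeSet := edgeSet_mono (hD.1 B₁ h1).1 he1
      obtain ⟨B', -, huni⟩ := hD.2 e hev
      exact (huni B₁ ⟨h1, he1⟩).trans (huni B₂ ⟨h2, he2⟩).symm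
    set cherryF : ∀ B : SimpleGraph ℕ, B ∈ D → Finset (Sym2 ℕ) :=
      fun B hB => {s(γf B hB, af B hB), s(γf B hB, bf B hB)} with hcherryF
    have hcherry_sub : ∀ B (hB : B ∈ D), ∀ g ∈ cherryF B hB,
        g ∈ B.edgeSet ∧ g ∈ EK n ∧ (0 : ℕ) ∉ g := by
      intro B hB g hg
      rw [hcherryF] at hg
      rcases Finset.mem_insert.mp hg with rfl | hg
      · refine ⟨(SimpleGraph.mem_edgeSet _).mpr (hadj_a B hB),
          mem_EK_of (hne_ga B hB) (h_gn B hB) (h_an B hB), ?_⟩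
        simp only [Sym2.mem_iff]
        push_neg
        exact ⟨Ne.symm (h_g0 B hB), Ne.symm (h_a0 B hB)⟩
      · rcases Finset.mem_singleton.mp hg with rfl
        refine ⟨(SimpleGraph.mem_edgeSet _).mpr (hadj_b B hB),
          mem_EK_of (hne_gb B hB) (h_gn B hB) (h_bn B hB), ?_⟩
        simp only [Sym2.mem_iff]
        push_neg
        exact ⟨Ne.symm (h_g0 B hB), Ne.symm (h_b0 B hB)⟩
    -- D is finite
    have hfinD : D.Finite := by
      rw [← Set.finite_coe_iff]
      refine Finite.of_injective
        (fun b : D => (⟨s(γf b.1 b.2, af b.1 b.2),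
          mem_EK_of (hne_ga b.1 b.2) (h_gn b.1 b.2) (h_an b.1 b.2)⟩ : {e // e ∈ EK n})) ?_
      rintro ⟨B₁, h1⟩ ⟨B₂, h2⟩ heq
      simp only [Subtype.mk.injEq] at heq
      have he1 : s(γf B₁ h1, af B₁ h1) ∈ B₁.edgeSet :=
        (SimpleGraph.mem_edgeSet _).mpr (hadj_a B₁ h1)
      have he2' : s(γf B₂ h2, af B₂ h2) ∈ B₂.edgeSet :=
        (SimpleGraph.mem_edgeSet _).mpr (hadj_a B₂ h2)
      exact Subtype.ext (huniq _ B₁ B₂ h1 h2 (heq ▸ he1) he2')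
    set DF := hfinD.toFinset with hDFdef
    have hDF : ∀ {B}, B ∈ DF ↔ B ∈ D := fun {B} => Set.Finite.mem_toFinset hfinD
    set AllC : Finset (Sym2 ℕ) := DF.attach.biUnion (fun x => cherryF x.1 (hDF.mp x.2))
      with hAllC
    have hmemAllC : ∀ {g}, g ∈ AllC ↔ ∃ B, ∃ hB : B ∈ D, g ∈ cherryF B hB := by
      intro g
      rw [hAllC, Finset.mem_biUnion]
      constructor
      · rintro ⟨⟨B, hBDF⟩, -, hg⟩
        exact ⟨B, hDF.mp hBDF, hg⟩
      · rintro ⟨B, hB, hg⟩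
        exact ⟨⟨B, hDF.mpr hB⟩, Finset.mem_attach _ _, hg⟩
    have hAllC_avoid0 : ∀ g ∈ AllC, (0 : ℕ) ∉ g := by
      intro g hg
      obtain ⟨B, hB, hgc⟩ := hmemAllC.mp hg
      exact (hcherry_sub B hB g hgc).2.2
    have hAllC_sub : AllC ⊆ EK n := by
      intro g hg
      obtain ⟨B, hB, hgc⟩ := hmemAllC.mp hg
      exact (hcherry_sub B hB g hgc).2.1
    have hdisjC : ∀ x ∈ DF.attach, ∀ y ∈ DF.attach, x ≠ y →
        Disjoint (cherryF x.1 (hDF.mp x.2)) (cherryF y.1 (hDF.mp y.2)) := by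
      rintro x - y - hxy
      rw [Finset.disjoint_left]
      intro g hgx hgy
      have hg1 := (hcherry_sub x.1 (hDF.mp x.2) g hgx).1
      have hg2 := (hcherry_sub y.1 (hDF.mp y.2) g hgy).1
      exact hxy (Subtype.ext (huniq g x.1 y.1 (hDF.mp x.2) (hDF.mp y.2) hg1 hg2))
    have hccard : ∀ x ∈ DF.attach, (cherryF x.1 (hDF.mp x.2)).card = 2 := by
      rintro x -
      rw [hcherryF, Finset.card_insert_of_notMem, Finset.card_singleton]
      simp only [Finset.mem_singleton]
      intro hcontra
      rcases Sym2.eq_iff.mp hcontra with ⟨-, hh⟩ | ⟨h1, h2⟩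
      · exact h_ab x.1 (hDF.mp x.2) hh
      · exact h_ab x.1 (hDF.mp x.2) (h2.trans h1)
    have hAllCcard : Even AllC.card := by
      rw [hAllC, Finset.card_biUnion hdisjC, Finset.sum_congr rfl hccard,
        Finset.sum_const, smul_eq_mul]
      exact ⟨DF.attach.card, by ring⟩
    set EL := EK n \ AllC with hEL
    have hELcard : Even EL.card := by
      rw [hEL, Finset.card_sdiff_of_subset hAllC_sub]
      have h1 : Even (EK n).card := by
        rw [card_EK]
        exact even_choose2 (by omega)
      rw [Nat.even_iff] at h1 hAllCcard ⊢
      omega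
    have hELpair : Pairable EL := by
      apply pairable_hub 0 EL.card EL le_rfl
      · intro e he
        exact EK_not_diag (Finset.mem_sdiff.mp he).1
      · exact hELcard
      · intro e he x hx hx0
        have hin := (Finset.mem_sdiff.mp he).1
        have hxn : x < n := EK_lt hin x hx
        refine Finset.mem_sdiff.mpr ⟨mem_EK_of (Ne.symm hx0) (by omega) hxn, ?_⟩
        intro hcontra
        exact hAllC_avoid0 _ hcontra (by simp)
    obtain ⟨P, hPshape, hPcover, hPsub, hPdisj⟩ := pairable_parts hELpair
    -- the target design
    refine ⟨{G | (∃ B, ∃ hB : B ∈ D, G = cherryG (γf B hB) (af B hB) (bf B hB)) ∨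
        (∃ p ∈ P, G = SimpleGraph.fromEdgeSet ↑p)}, ⟨?_, ?_⟩,
      fun B => if hB : B ∈ D then cherryG (γf B hB) (af B hB) (bf B hB) else ⊥, ?_⟩
    · -- every block of D' is a copy of P₃ inside K_{v-3}
      rintro G (⟨B, hB, rfl⟩ | ⟨p, hp, rfl⟩)
      · refine ⟨?_, cherryG_isCopy (hne_ga B hB) (hne_gb B hB) (h_ab B hB),
          cherryG_nonempty (hne_ga B hB) (hne_gb B hB)⟩
        intro u w huw
        rw [cherryG_adj] at huw
        obtain ⟨hm, hne⟩ := huw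
        rcases hm with hh | hh <;>
          rcases Sym2.eq_iff.mp hh with ⟨rfl, rfl⟩ | ⟨rfl, rfl⟩ <;>
          exact ⟨hne, Set.mem_Iio.mpr (by
            first
            | exact h_gn B hB
            | exact h_an B hB
            | exact h_bn B hB), Set.mem_Iio.mpr (by
            first
            | exact h_gn B hB
            | exact h_an B hB
            | exact h_bn B hB)⟩
      · obtain ⟨c, x, y, hcx, hcy, hxy, rfl⟩ := hPshape p hp
        have hco : (SimpleGraph.fromEdgeSet (↑({s(c, x), s(c, y)} : Finset (Sym2 ℕ)))) =
            cherryG c x y := by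
          rw [cherryG]
          congr 1
          simp
        rw [hco]
        have h1 : s(c, x) ∈ EL := hPsub _ hp _ (by simp)
        have h2 : s(c, y) ∈ EL := hPsub _ hp _ (by simp)
        have hcn : c < n := EK_lt (Finset.mem_sdiff.mp h1).1 c (by simp)
        have hxn : x < n := EK_lt (Finset.mem_sdiff.mp h1).1 x (by simp)
        have hyn : y < n := EK_lt (Finset.mem_sdiff.mp h2).1 y (by simp)
        refine ⟨?_, cherryG_isCopy hcx hcy hxy, cherryG_nonempty hcx hcy⟩
        intro u w huw
        rw [cherryG_adj] at huw
        obtain ⟨hm, hne⟩ := huw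
        rcases hm with hh | hh <;>
          rcases Sym2.eq_iff.mp hh with ⟨rfl, rfl⟩ | ⟨rfl, rfl⟩ <;>
          exact ⟨hne, Set.mem_Iio.mpr (by omega), Set.mem_Iio.mpr (by omega)⟩
    · -- every edge of K_{v-3} lies in a unique block of D'
      intro e he
      have heK : e ∈ EK n := by
        obtain ⟨x, y, rfl⟩ := sym2_repr e
        rw [SimpleGraph.mem_edgeSet] at he
        exact mem_EK_of he.1 (Set.mem_Iio.mp he.2.1) (Set.mem_Iio.mp he.2.2)
      by_cases hc : e ∈ AllC
      · obtain ⟨B, hB, hgc⟩ := hmemAllC.mp hc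
        refine ⟨cherryG (γf B hB) (af B hB) (bf B hB), ⟨Or.inl ⟨B, hB, rfl⟩, ?_⟩, ?_⟩
        · rw [cherryG_edgeSet (hne_ga B hB) (hne_gb B hB)]
          rw [hcherryF] at hgc
          simpa using hgc
        · rintro G ⟨(⟨B', hB', rfl⟩ | ⟨p, hp, rfl⟩), heG⟩
          · rw [cherryG_edgeSet (hne_ga B' hB') (hne_gb B' hB')] at heG
            have he' : e ∈ B'.edgeSet := by
              rcases heG with rfl | heG
              · exact (SimpleGraph.mem_edgeSet _).mpr (hadj_a B' hB')
              · rcases heG with rfl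
                exact (SimpleGraph.mem_edgeSet _).mpr (hadj_b B' hB')
            have heB : e ∈ B.edgeSet := (hcherry_sub B hB e hgc).1
            have hBB : B' = B := huniq e B' B hB' hB he' heB
            subst hBB
            rfl
          · exfalso
            obtain ⟨c, x, y, hcx, hcy, hxy, rfl⟩ := hPshape p hp
            have hco : (SimpleGraph.fromEdgeSet (↑({s(c, x), s(c, y)} : Finset (Sym2 ℕ)))) =
                cherryG c x y := by
              rw [cherryG]; congr 1; simp
            rw [hco, cherryG_edgeSet hcx hcy] at heG
            have hef : e ∈ ({s(c, x), s(c, y)} : Finset (Sym2 ℕ)) := by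
              simpa using heG
            have : e ∈ EL := hPsub _ hp _ hef
            exact (Finset.mem_sdiff.mp this).2 hc
      · have heEL : e ∈ EL := Finset.mem_sdiff.mpr ⟨heK, hc⟩
        obtain ⟨p, hp, hep⟩ := hPcover e heEL
        refine ⟨SimpleGraph.fromEdgeSet ↑p, ⟨Or.inr ⟨p, hp, rfl⟩, ?_⟩, ?_⟩
        · obtain ⟨c, x, y, hcx, hcy, hxy, hpeq⟩ := hPshape p hp
          subst hpeq
          have hco : (SimpleGraph.fromEdgeSet (↑({s(c, x), s(c, y)} : Finset (Sym2 ℕ)))) =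
              cherryG c x y := by
            rw [cherryG]; congr 1; simp
          rw [hco, cherryG_edgeSet hcx hcy]
          simpa using hep
        · rintro G ⟨(⟨B', hB', rfl⟩ | ⟨q, hq, rfl⟩), heG⟩
          · exfalso
            rw [cherryG_edgeSet (hne_ga B' hB') (hne_gb B' hB')] at heG
            apply hc
            apply hmemAllC.mpr
            refine ⟨B', hB', ?_⟩
            rw [hcherryF]
            simpa using heG
          · obtain ⟨c, x, y, hcx, hcy, hxy, hqeq⟩ := hPshape q hq
            subst hqeq
            have hco : (SimpleGraph.fromEdgeSet (↑({s(c, x), s(c, y)} : Finset (Sym2 ℕ)))) =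
                cherryG c x y := by
              rw [cherryG]; congr 1; simp
            rw [hco, cherryG_edgeSet hcx hcy] at heG
            have heq : e ∈ ({s(c, x), s(c, y)} : Finset (Sym2 ℕ)) := by simpa using heG
            have hqp : ({s(c, x), s(c, y)} : Finset (Sym2 ℕ)) = p := by
              by_contra hne
              exact hPdisj _ hq p hp hne e heq hep
            rw [hqp]
    · -- the down-link
      intro B hB
      simp only [dif_pos hB]
      refine ⟨Or.inl ⟨B, hB, rfl⟩, ?_⟩
      intro u w huw
      rw [cherryG_adj] at huw
      obtain ⟨hm, -⟩ := huw
      rcases hm with hh | hh <;> rcases Sym2.eq_iff.mp hh with ⟨rfl, rfl⟩ | ⟨rfl, rfl⟩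
      · exact hadj_a B hB
      · exact (hadj_a B hB).symm
      · exact hadj_b B hB
      · exact (hadj_b B hB).symm
end

section
/- In any (K_v, S_k)-design (decomposition of K_v into stars with k edges), at most one vertex of K_v fails to be the center of any star. -/
open SimpleGraph

/-- The star `S_k = K_{1,k}`: vertex `0` is the center. -/
def starGraph (k : ℕ) : SimpleGraph (Fin (k + 1)) where
  Adj x y := x ≠ y ∧ (x = 0 ∨ y = 0)
  symm := ⟨fun x y ⟨h, ho⟩ => ⟨h.symm, ho.symm⟩⟩
  loopless := ⟨fun x h => h.1 rfl⟩

/-- `c` is the center of the star block `B`: `B` has edges and all of them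
pass through `c`. -/
def IsStarCenter (B : SimpleGraph ℕ) (c : ℕ) : Prop :=
  B.edgeSet.Nonempty ∧ ∀ e ∈ B.edgeSet, c ∈ e

/-- In a `(K_v,S_k)`-design, at most one vertex fails to be the center of any
block. -/
theorem stmt8 (k v : ℕ) (hk : 2 ≤ k) (D : Set (SimpleGraph ℕ))
    (hD : IsDesign (Kon (Set.Iio v)) (_root_.starGraph k) D) :
    Set.Subsingleton {x | x ∈ Set.Iio v ∧ ∀ B ∈ D, ¬ IsStarCenter B x} := by
  rintro x ⟨hxv, hx⟩ y ⟨hyv, hy⟩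
  by_contra hxy
  -- the edge {x,y} lies in K_v
  have hadj : (Kon (Set.Iio v)).Adj x y := ⟨hxy, hxv, hyv⟩
  obtain ⟨B, ⟨hBD, hBe⟩, _⟩ := hD.2 (s(x, y)) (by rwa [SimpleGraph.mem_edgeSet])
  obtain ⟨_, ⟨φ, hφ⟩, _⟩ := hD.1 B hBD
  -- B is a star with center φ 0
  have hcenter : IsStarCenter B (φ 0) := by
    refine ⟨⟨s(x, y), hBe⟩, ?_⟩
    intro e he
    induction e with
    | h p q =>
      rw [SimpleGraph.mem_edgeSet, hφ] at he
      obtain ⟨a, b, ⟨_, hab0⟩, ha, hb⟩ := he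
      rcases hab0 with h0 | h0
      · subst h0; rw [ha, Sym2.mem_iff]; exact Or.inl rfl
      · subst h0; rw [hb, Sym2.mem_iff]; exact Or.inr rfl
  -- but one of x, y equals φ 0
  have hBadj : B.Adj x y := by rwa [SimpleGraph.mem_edgeSet] at hBe
  rw [hφ] at hBadj
  obtain ⟨a, b, ⟨_, hab0⟩, ha, hb⟩ := hBadj
  rcases hab0 with h0 | h0
  · subst h0; exact hx B hBD (ha ▸ hcenter)
  · subst h0; exact hy B hBD (hb ▸ hcenter)
end

section
/- If v > 2k and there exists a (K_v,S_k)-design with a vertex x that is not the center of any block, then there also exists a (K_v,S_k)-design in which every vertex is the center of at least one block. -/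
open SimpleGraph

def starOn (c : ℕ) (L : Finset ℕ) : SimpleGraph ℕ where
  Adj x y := x ≠ y ∧ ((x = c ∧ y ∈ L) ∨ (y = c ∧ x ∈ L))
  symm := ⟨fun x y ⟨h, ho⟩ => ⟨h.symm, ho.symm⟩⟩
  loopless := ⟨fun x h => h.1 rfl⟩

lemma starOn_adj {c x y : ℕ} {L : Finset ℕ} :
    (starOn c L).Adj x y ↔ x ≠ y ∧ ((x = c ∧ y ∈ L) ∨ (y = c ∧ x ∈ L)) := Iff.rfl

lemma kon_adj {s : Set ℕ} {x y : ℕ} : (Kon s).Adj x y ↔ x ≠ y ∧ x ∈ s ∧ y ∈ s := Iff.rfl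

lemma starOn_mem_edgeSet {c : ℕ} {L : Finset ℕ} (hc : c ∉ L) {e : Sym2 ℕ} :
    e ∈ (starOn c L).edgeSet ↔ ∃ l ∈ L, e = s(c, l) := by
  induction e using Sym2.ind with
  | _ a b =>
    simp only [SimpleGraph.mem_edgeSet, starOn_adj]
    constructor
    · rintro ⟨hne, (⟨rfl, hb⟩ | ⟨rfl, ha⟩)⟩
      · exact ⟨b, hb, rfl⟩
      · exact ⟨a, ha, Sym2.eq_swap⟩
    · rintro ⟨l, hl, he⟩
      rw [Sym2.eq_iff] at he
      rcases he with ⟨rfl, rfl⟩ | ⟨rfl, rfl⟩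
      · exact ⟨fun hcl => hc (hcl ▸ hl), Or.inl ⟨rfl, hl⟩⟩
      · exact ⟨fun hcl => hc (hcl ▸ hl), Or.inr ⟨rfl, hl⟩⟩

lemma isStarCenter_starOn {c : ℕ} {L : Finset ℕ} (hc : c ∉ L) (hL : L.Nonempty) :
    IsStarCenter (starOn c L) c := by
  obtain ⟨l, hl⟩ := hL
  constructor
  · exact ⟨s(c, l), (starOn_mem_edgeSet hc).2 ⟨l, hl, rfl⟩⟩
  · intro e he
    obtain ⟨l', _, rfl⟩ := (starOn_mem_edgeSet hc).1 he
    exact Sym2.mem_mk_left c l'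

lemma isCopy_star_iff {k : ℕ} (hk : 1 ≤ k) {B : SimpleGraph ℕ} :
    IsCopy (_root_.starGraph k) B ↔ ∃ c L, c ∉ L ∧ L.card = k ∧ B = starOn c L := by
  constructor
  · rintro ⟨φ, hφ⟩
    refine ⟨φ 0, Finset.univ.image (fun i : Fin k => φ i.succ), ?_, ?_, ?_⟩
    · simp only [Finset.mem_image, Finset.mem_univ, true_and]
      rintro ⟨i, hi⟩
      exact (Fin.succ_ne_zero i) (φ.injective hi)
    · rw [Finset.card_image_of_injective _ (fun i j hij => Fin.succ_injective _ (φ.injective hij))]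
      simp
    · ext x y
      rw [hφ, starOn_adj]
      constructor
      · rintro ⟨a, b, ⟨hab, h0⟩, rfl, rfl⟩
        refine ⟨fun hxy => hab (φ.injective hxy), ?_⟩
        rcases h0 with rfl | rfl
        · refine Or.inl ⟨rfl, ?_⟩
          simp only [Finset.mem_image, Finset.mem_univ, true_and]
          obtain ⟨i, rfl⟩ := Fin.exists_succ_eq.2 (Ne.symm hab)
          exact ⟨i, rfl⟩
        · refine Or.inr ⟨rfl, ?_⟩
          simp only [Finset.mem_image, Finset.mem_univ, true_and]
          obtain ⟨i, rfl⟩ := Fin.exists_succ_eq.2 hab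
          exact ⟨i, rfl⟩
      · rintro ⟨hxy, (⟨rfl, hy⟩ | ⟨rfl, hx⟩)⟩
        · simp only [Finset.mem_image, Finset.mem_univ, true_and] at hy
          obtain ⟨i, rfl⟩ := hy
          exact ⟨0, i.succ, ⟨(Fin.succ_ne_zero i).symm, Or.inl rfl⟩, rfl, rfl⟩
        · simp only [Finset.mem_image, Finset.mem_univ, true_and] at hx
          obtain ⟨i, rfl⟩ := hx
          exact ⟨i.succ, 0, ⟨Fin.succ_ne_zero i, Or.inr rfl⟩, rfl, rfl⟩
  · rintro ⟨c, L, hc, hcard, rfl⟩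
    have e : Fin k ≃ {x // x ∈ L} := (L.equivFin.trans (finCongr hcard)).symm
    refine ⟨⟨Fin.cases c (fun i => (e i : ℕ)), ?_⟩, ?_⟩
    · rw [Function.Injective]
      intro i j hij
      induction i using Fin.cases with
      | zero =>
        induction j using Fin.cases with
        | zero => rfl
        | succ j => exact absurd hij.symm (fun h => hc (((Fin.cases_succ (motive := fun _ => ℕ) (zero := c) (succ := fun i => (e i : ℕ)) j).symm.trans (h.trans Fin.cases_zero)) ▸ (e j).2))
      | succ i =>
        induction j using Fin.cases with
        | zero => exact absurd hij (fun h => hc (((Fin.cases_succ (motive := fun _ => ℕ) (zero := c) (succ := fun i => (e i : ℕ)) i).symm.trans (h.trans Fin.cases_zero)) ▸ (e i).2))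
        | succ j =>
          have hij' : (e i : ℕ) = e j := (Fin.cases_succ (motive := fun _ => ℕ) (zero := c) (succ := fun i => (e i : ℕ)) i).symm.trans (hij.trans (Fin.cases_succ j))
          exact congrArg Fin.succ (e.apply_eq_iff_eq.1 (Subtype.ext hij'))
    · intro x y
      simp only [Function.Embedding.coeFn_mk]
      constructor
      · rintro ⟨hxy, (⟨rfl, hy⟩ | ⟨rfl, hx⟩)⟩
        · obtain ⟨i, hi⟩ := e.surjective ⟨y, hy⟩
          exact ⟨0, i.succ, ⟨(Fin.succ_ne_zero i).symm, Or.inl rfl⟩, rfl, by simp [hi]⟩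
        · obtain ⟨i, hi⟩ := e.surjective ⟨x, hx⟩
          exact ⟨i.succ, 0, ⟨Fin.succ_ne_zero i, Or.inr rfl⟩, by simp [hi], rfl⟩
      · rintro ⟨a, b, ⟨hab, h0⟩, rfl, rfl⟩
        rcases h0 with rfl | rfl
        · obtain ⟨j, rfl⟩ := Fin.exists_succ_eq.2 (Ne.symm hab)
          simp only [Fin.cases_zero, Fin.cases_succ]
          exact ⟨fun hh => hc (hh ▸ (e j).2), Or.inl ⟨rfl, (e j).2⟩⟩
        · obtain ⟨j, rfl⟩ := Fin.exists_succ_eq.2 hab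
          simp only [Fin.cases_zero, Fin.cases_succ]
          exact ⟨fun hh => hc (hh.symm ▸ (e j).2), Or.inr ⟨rfl, (e j).2⟩⟩

lemma starOn_le_kon {c : ℕ} {L : Finset ℕ} {s : Set ℕ} (hcs : c ∈ s) (hLs : ∀ l ∈ L, l ∈ s) :
    starOn c L ≤ Kon s := by
  rintro x y ⟨hxy, (⟨rfl, hy⟩ | ⟨rfl, hx⟩)⟩
  · exact ⟨hxy, hcs, hLs _ hy⟩
  · exact ⟨hxy, hLs _ hx, hcs⟩

/-- If `v > 2k` and some `(K_v,S_k)`-design has a vertex which is not the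
center of any block, then some `(K_v,S_k)`-design has every vertex as the
center of at least one block. -/
theorem stmt9 (k v : ℕ) (hk : 3 < k) (hv : 2 * k < v)
    (h : ∃ D : Set (SimpleGraph ℕ), IsDesign (Kon (Set.Iio v)) (_root_.starGraph k) D ∧
      ∃ x ∈ Set.Iio v, ∀ B ∈ D, ¬ IsStarCenter B x) :
    ∃ D : Set (SimpleGraph ℕ), IsDesign (Kon (Set.Iio v)) (_root_.starGraph k) D ∧
      ∀ x ∈ Set.Iio v, ∃ B ∈ D, IsStarCenter B x := by
  classical
  obtain ⟨D, hD, x, hxv, hx⟩ := h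
  have hk1 : 1 ≤ k := by omega
  set G := Kon (Set.Iio v) with hG
  -- totalized unique-block function
  have hU0 : ∀ e : Sym2 ℕ, ∃ B, e ∈ G.edgeSet →
      (B ∈ D ∧ e ∈ B.edgeSet ∧ ∀ B' ∈ D, e ∈ B'.edgeSet → B' = B) := by
    intro e
    by_cases he : e ∈ G.edgeSet
    · obtain ⟨B, ⟨hBD, hBe⟩, huniq⟩ := hD.2 e he
      exact ⟨B, fun _ => ⟨hBD, hBe, fun B' hB' he' => huniq B' ⟨hB', he'⟩⟩⟩
    · exact ⟨⊥, fun he' => absurd he' he⟩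
  choose U hU using hU0
  -- totalized center/leaves functions
  have hCL0 : ∀ B : SimpleGraph ℕ, ∃ c L, B ∈ D →
      (c ∉ L ∧ L.card = k ∧ B = starOn c L) := by
    intro B
    by_cases hB : B ∈ D
    · obtain ⟨c, L, h1, h2, h3⟩ := (isCopy_star_iff hk1).1 (hD.1 B hB).2.1
      exact ⟨c, L, fun _ => ⟨h1, h2, h3⟩⟩
    · exact ⟨0, ∅, fun hB' => absurd hB' hB⟩
  choose ctr lvs hCL using hCL0
  have hlvs_ne : ∀ B ∈ D, (lvs B).Nonempty := by
    intro B hB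
    rw [← Finset.card_pos, (hCL B hB).2.1]; omega
  -- x is never a center
  have hctrx : ∀ B ∈ D, ctr B ≠ x := by
    intro B hB hc
    obtain ⟨h1, h2, h3⟩ := hCL B hB
    have hsc := isStarCenter_starOn h1 (hlvs_ne B hB)
    rw [← h3, hc] at hsc
    exact hx B hB hsc
  -- edge characterization of blocks
  have hedge : ∀ B ∈ D, ∀ e : Sym2 ℕ, e ∈ B.edgeSet ↔ ∃ l ∈ lvs B, e = s(ctr B, l) := by
    intro B hB e
    obtain ⟨h1, h2, h3⟩ := hCL B hB
    conv_lhs => rw [h3]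
    exact starOn_mem_edgeSet h1
  -- vertices of blocks lie in Iio v
  have hBound : ∀ B ∈ D, ctr B ∈ Set.Iio v ∧ ∀ l ∈ lvs B, l ∈ Set.Iio v := by
    intro B hB
    obtain ⟨l0, hl0⟩ := hlvs_ne B hB
    have hle := (hD.1 B hB).1
    have key : ∀ l ∈ lvs B, ctr B ∈ Set.Iio v ∧ l ∈ Set.Iio v := by
      intro l hl
      have : s(ctr B, l) ∈ B.edgeSet := (hedge B hB _).2 ⟨l, hl, rfl⟩
      have := (SimpleGraph.edgeSet_subset_edgeSet.2 hle) this
      rw [SimpleGraph.mem_edgeSet, hG, kon_adj] at this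
      exact this.2
    exact ⟨(key l0 hl0).1, fun l hl => (key l hl).2⟩
  -- the blocks through x
  have hxe : ∀ c, c ∈ Set.Iio v → c ≠ x → s(x, c) ∈ G.edgeSet := by
    intro c hc hcx
    rw [SimpleGraph.mem_edgeSet, hG, kon_adj]
    exact ⟨Ne.symm hcx, hxv, hc⟩
  have hBc : ∀ c, c ∈ Set.Iio v → c ≠ x →
      U s(x, c) ∈ D ∧ ctr (U s(x, c)) = c ∧ x ∈ lvs (U s(x, c)) := by
    intro c hc hcx
    obtain ⟨hBD, hBe, _⟩ := hU s(x, c) (hxe c hc hcx)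
    refine ⟨hBD, ?_⟩
    obtain ⟨l, hl, he⟩ := (hedge _ hBD _).1 hBe
    rw [Sym2.eq_iff] at he
    rcases he with ⟨hxc, _⟩ | ⟨hxl, hcc⟩
    · exact absurd hxc.symm (hctrx _ hBD)
    · exact ⟨hcc.symm, hxl ▸ hl⟩
  -- counting: some edge lies in no block through x
  set Covered : Finset (Sym2 ℕ) :=
    ((Finset.Iio v).erase x).biUnion
      (fun c => (lvs (U s(x, c))).image (fun l => s(c, l))) with hCovdef
  have hCovered_card : Covered.card ≤ (v - 1) * k := by
    calc Covered.card ≤ ∑ c ∈ (Finset.Iio v).erase x,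
        ((lvs (U s(x, c))).image (fun l => s(c, l))).card := Finset.card_biUnion_le
      _ ≤ ∑ c ∈ (Finset.Iio v).erase x, k := by
          refine Finset.sum_le_sum fun c hc => ?_
          rw [Finset.mem_erase, Finset.mem_Iio] at hc
          calc ((lvs (U s(x, c))).image (fun l => s(c, l))).card
              ≤ (lvs (U s(x, c))).card := Finset.card_image_le
            _ = k := (hCL _ ((hBc c hc.2 hc.1).1)).2.1
      _ = (v - 1) * k := by
          rw [Finset.sum_const, smul_eq_mul, Finset.card_erase_of_mem, Nat.card_Iio]
          rw [Finset.mem_Iio]; exact hxv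
  set AllE : Finset (Sym2 ℕ) := (Finset.Iio v).offDiag.image Sym2.mk.uncurry with hAllEdef
  have hAllE_card : AllE.card = v.choose 2 := by
    rw [hAllEdef, Sym2.card_image_offDiag, Nat.card_Iio]
  have hcard_lt : Covered.card < AllE.card := by
    rw [hAllE_card]
    obtain ⟨m, hm⟩ : ∃ m, v = m + 1 := ⟨v - 1, by omega⟩
    subst hm
    rw [Nat.add_sub_cancel] at hCovered_card
    have h2 : (m + 1).choose 2 * 2 = (m + 1) * m := by
      rw [Nat.choose_two_right, Nat.add_sub_cancel]
      exact Nat.div_mul_cancel (by simpa [Nat.mul_comm] using (Nat.even_mul_succ_self m).two_dvd)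
    have h5 : Covered.card * 2 < (m + 1).choose 2 * 2 := by
      rw [h2]
      have hmk : 2 * k ≤ m := by omega
      calc Covered.card * 2 ≤ m * k * 2 := by omega
        _ < (m + 1) * m := by nlinarith
    omega
  obtain ⟨est, hestA, hestC⟩ : ∃ e ∈ AllE, e ∉ Covered := by
    by_contra hno
    push_neg at hno
    exact absurd (Finset.card_le_card fun e he => hno e he) (by omega)
  have hestG : est ∈ G.edgeSet := by
    rw [hAllEdef, Finset.mem_image] at hestA
    obtain ⟨⟨a, b⟩, hab, rfl⟩ := hestA
    rw [Finset.mem_offDiag] at hab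
    rw [Function.uncurry_apply_pair, SimpleGraph.mem_edgeSet, hG, kon_adj]
    exact ⟨hab.2.2, Finset.mem_Iio.1 hab.1, Finset.mem_Iio.1 hab.2.1⟩
  -- edges of blocks through x are covered
  have hcov : ∀ c, c ∈ Set.Iio v → c ≠ x → ∀ e ∈ (U s(x, c)).edgeSet, e ∈ Covered := by
    intro c hc hcx e he
    obtain ⟨hBD, hctrc, _⟩ := hBc c hc hcx
    obtain ⟨l, hl, rfl⟩ := (hedge _ hBD _).1 he
    rw [hCovdef, Finset.mem_biUnion]
    exact ⟨c, Finset.mem_erase.2 ⟨hcx, Finset.mem_Iio.2 hc⟩,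
      Finset.mem_image.2 ⟨l, hl, by rw [hctrc]⟩⟩
  -- the special block avoiding x
  set Bst := U est with hBstdef
  obtain ⟨hBstD, hBste, _⟩ := hU est hestG
  have hBst_ne : ∀ c ∈ Set.Iio v, c ≠ x → Bst ≠ U s(x, c) := by
    intro c hc hcx heq
    exact hestC (hcov c hc hcx est (heq ▸ hBste))
  set cst := ctr Bst with hcst
  set Zf := lvs Bst with hZf
  have hcstv : cst ∈ Set.Iio v := (hBound Bst hBstD).1
  have hcstx : cst ≠ x := hctrx Bst hBstD
  have hZcard : Zf.card = k := (hCL Bst hBstD).2.1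
  have hZne : Zf.Nonempty := hlvs_ne Bst hBstD
  have hcstZ : cst ∉ Zf := (hCL Bst hBstD).1
  have hZv : ∀ z ∈ Zf, z ∈ Set.Iio v := (hBound Bst hBstD).2
  have hBstedge : ∀ e : Sym2 ℕ, e ∈ Bst.edgeSet ↔ ∃ z ∈ Zf, e = s(cst, z) :=
    hedge Bst hBstD
  have hxZ : x ∉ Zf := by
    intro hxZ
    refine hBst_ne cst hcstv hcstx ?_
    refine (hU s(x, cst) (hxe cst hcstv hcstx)).2.2 Bst hBstD ?_
    rw [Sym2.eq_swap]
    exact hBstedge _ |>.2 ⟨x, hxZ, rfl⟩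
  have hzx : ∀ z ∈ Zf, z ≠ x := fun z hz hzx => hxZ (hzx ▸ hz)
  have hzfacts : ∀ z ∈ Zf, U s(x, z) ∈ D ∧ ctr (U s(x, z)) = z ∧ x ∈ lvs (U s(x, z)) :=
    fun z hz => hBc z (hZv z hz) (hzx z hz)
  have hcstL : ∀ z ∈ Zf, cst ∉ lvs (U s(x, z)) := by
    intro z hz hmem
    obtain ⟨hzD, hzctr, _⟩ := hzfacts z hz
    have hne : cst ≠ z := fun hh => hcstZ (hh ▸ hz)
    have hcze : s(cst, z) ∈ G.edgeSet := by
      rw [SimpleGraph.mem_edgeSet, hG, kon_adj]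
      exact ⟨hne, hcstv, hZv z hz⟩
    obtain ⟨_, _, huq⟩ := hU s(cst, z) hcze
    have h1 : Bst = U s(cst, z) := huq Bst hBstD ((hBstedge _).2 ⟨z, hz, rfl⟩)
    have h2 : U s(x, z) = U s(cst, z) := by
      refine huq _ hzD ?_
      rw [hedge _ hzD, hzctr]
      exact ⟨cst, hmem, Sym2.eq_swap⟩
    exact hBst_ne z (hZv z hz) (hzx z hz) (h1.trans h2.symm)
  -- the new blocks
  set Lz : ℕ → Finset ℕ := fun z => insert cst ((lvs (U s(x, z))).erase x) with hLzdef
  set NB : ℕ → SimpleGraph ℕ := fun z => starOn z (Lz z) with hNdef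
  set Sx : SimpleGraph ℕ := starOn x Zf with hSxdef
  have hLzx : ∀ z ∈ Zf, x ∉ Lz z := by
    intro z hz hmem
    rcases Finset.mem_insert.1 hmem with hh | hh
    · exact hcstx hh.symm
    · exact (Finset.mem_erase.1 hh).1 rfl
  have hLzz : ∀ z ∈ Zf, z ∉ Lz z := by
    intro z hz hmem
    rcases Finset.mem_insert.1 hmem with hh | hh
    · exact hcstZ (hh ▸ hz)
    · have h1 := (hCL _ (hzfacts z hz).1).1
      rw [(hzfacts z hz).2.1] at h1
      exact h1 (Finset.mem_erase.1 hh).2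
  have hLzcard : ∀ z ∈ Zf, (Lz z).card = k := by
    intro z hz
    rw [hLzdef]
    rw [Finset.card_insert_of_notMem (fun hh => hcstL z hz (Finset.mem_erase.1 hh).2),
      Finset.card_erase_of_mem (hzfacts z hz).2.2, (hCL _ (hzfacts z hz).1).2.1]
    omega
  have hLzne : ∀ z ∈ Zf, (Lz z).Nonempty := fun z hz =>
    Finset.card_pos.1 (by rw [hLzcard z hz]; omega)
  have hLzv : ∀ z ∈ Zf, ∀ l ∈ Lz z, l ∈ Set.Iio v := by
    intro z hz l hl
    rcases Finset.mem_insert.1 hl with rfl | hh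
    · exact hcstv
    · exact (hBound _ (hzfacts z hz).1).2 l (Finset.mem_erase.1 hh).2
  have hNedge : ∀ z ∈ Zf, ∀ e : Sym2 ℕ, e ∈ (NB z).edgeSet ↔ ∃ l ∈ Lz z, e = s(z, l) :=
    fun z hz e => starOn_mem_edgeSet (hLzz z hz)
  have hSxedge : ∀ e : Sym2 ℕ, e ∈ Sx.edgeSet ↔ ∃ z ∈ Zf, e = s(x, z) :=
    fun e => starOn_mem_edgeSet hxZ
  -- the new design
  set D' : Set (SimpleGraph ℕ) := {B' | (B' ∈ D ∧ B' ≠ Bst ∧ ∀ z ∈ Zf, B' ≠ U s(x, z)) ∨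
    B' = Sx ∨ ∃ z ∈ Zf, B' = NB z} with hD'def
  have hD'mem : ∀ B', B' ∈ D' ↔ ((B' ∈ D ∧ B' ≠ Bst ∧ ∀ z ∈ Zf, B' ≠ U s(x, z)) ∨
      B' = Sx ∨ ∃ z ∈ Zf, B' = NB z) := fun B' => Iff.rfl
  refine ⟨D', ⟨?_, ?_⟩, ?_⟩
  · -- part 1 : blocks are subgraphs, copies, nonempty
    rintro B' (⟨hBD', _⟩ | rfl | ⟨z, hz, rfl⟩)
    · exact hD.1 B' hBD'
    · exact ⟨starOn_le_kon hxv (fun l hl => hZv l hl),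
        (isCopy_star_iff hk1).2 ⟨x, Zf, hxZ, hZcard, rfl⟩,
        (isStarCenter_starOn hxZ hZne).1⟩
    · exact ⟨starOn_le_kon (hZv z hz) (fun l hl => hLzv z hz l hl),
        (isCopy_star_iff hk1).2 ⟨z, Lz z, hLzz z hz, hLzcard z hz, rfl⟩,
        (isStarCenter_starOn (hLzz z hz) (hLzne z hz)).1⟩
  · -- part 2 : partition
    intro e he
    obtain ⟨hB0D, hB0e, hB0u⟩ := hU e he
    by_cases hcA : U e = Bst
    · -- e is an edge of Bst : goes to the new block NB z0
      obtain ⟨z0, hz0, rfl⟩ := (hBstedge e).1 (hcA ▸ hB0e)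
      refine ⟨NB z0, ⟨Or.inr (Or.inr ⟨z0, hz0, rfl⟩),
        (hNedge z0 hz0 _).2 ⟨cst, Finset.mem_insert_self _ _, Sym2.eq_swap⟩⟩, ?_⟩
      rintro B' ⟨hB'mem, hB'e⟩
      rcases hB'mem with ⟨hB'D, hB'ne, _⟩ | rfl | ⟨z1, hz1, rfl⟩
      · exact absurd ((hB0u B' hB'D hB'e).trans hcA) hB'ne
      · obtain ⟨z1, hz1, hzz⟩ := (hSxedge _).1 hB'e
        rw [Sym2.eq_iff] at hzz
        rcases hzz with ⟨h1, _⟩ | ⟨h1, _⟩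
        · exact absurd h1 hcstx
        · exact absurd (by rw [h1]; exact hz1) hcstZ
      · obtain ⟨l, hl, hll⟩ := (hNedge z1 hz1 _).1 hB'e
        rw [Sym2.eq_iff] at hll
        rcases hll with ⟨h1, _⟩ | ⟨_, h2⟩
        · exact absurd (by rw [h1]; exact hz1) hcstZ
        · exact (congrArg NB h2).symm
    · by_cases hcB : ∃ z ∈ Zf, U e = U s(x, z)
      · obtain ⟨z0, hz0, hB0z⟩ := hcB
        have hz0D := (hzfacts z0 hz0).1
        have hz0ctr := (hzfacts z0 hz0).2.1
        have he' : e ∈ (U s(x, z0)).edgeSet := hB0z ▸ hB0e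
        rw [hedge _ hz0D, hz0ctr] at he'
        obtain ⟨l, hl, rfl⟩ := he'
        by_cases hlx : l = x
        · subst hlx
          refine ⟨Sx, ⟨Or.inr (Or.inl rfl), (hSxedge _).2 ⟨z0, hz0, Sym2.eq_swap⟩⟩, ?_⟩
          rintro B' ⟨hB'mem, hB'e⟩
          rcases hB'mem with ⟨hB'D, _, hB'nz⟩ | rfl | ⟨z1, hz1, rfl⟩
          · exact absurd ((hB0u B' hB'D hB'e).trans hB0z) (hB'nz z0 hz0)
          · rfl
          · exfalso
            obtain ⟨l', hl', hll⟩ := (hNedge z1 hz1 _).1 hB'e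
            rw [Sym2.eq_iff] at hll
            rcases hll with ⟨_, h2⟩ | ⟨_, h2⟩
            · exact hLzx z1 hz1 (by rw [h2]; exact hl')
            · exact hxZ (by rw [h2]; exact hz1)
        · refine ⟨NB z0, ⟨Or.inr (Or.inr ⟨z0, hz0, rfl⟩), (hNedge z0 hz0 _).2
            ⟨l, Finset.mem_insert_of_mem (Finset.mem_erase.2 ⟨hlx, hl⟩), rfl⟩⟩, ?_⟩
          rintro B' ⟨hB'mem, hB'e⟩
          rcases hB'mem with ⟨hB'D, _, hB'nz⟩ | rfl | ⟨z1, hz1, rfl⟩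
          · exact absurd ((hB0u B' hB'D hB'e).trans hB0z) (hB'nz z0 hz0)
          · exfalso
            obtain ⟨z1, hz1, hll⟩ := (hSxedge _).1 hB'e
            rw [Sym2.eq_iff] at hll
            rcases hll with ⟨h1, _⟩ | ⟨_, h2⟩
            · exact (hzx z0 hz0) h1
            · exact hlx h2
          · obtain ⟨l', hl', hll⟩ := (hNedge z1 hz1 _).1 hB'e
            rw [Sym2.eq_iff] at hll
            rcases hll with ⟨h1, _⟩ | ⟨h1, h2⟩
            · exact (congrArg NB h1).symm
            · exfalso
              rcases Finset.mem_insert.1 hl' with hcc | hmm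
              · exact hcstZ (by rw [← (h1.trans hcc)]; exact hz0)
              · have hmm' : z0 ∈ lvs (U s(x, z1)) := by
                  rw [h1]; exact (Finset.mem_erase.1 hmm).2
                have hz1D := (hzfacts z1 hz1).1
                have he2 : s(z0, l) ∈ (U s(x, z1)).edgeSet := by
                  rw [hedge _ hz1D, (hzfacts z1 hz1).2.1]
                  exact ⟨z0, hmm', by rw [h2]; exact Sym2.eq_swap⟩
                have h3 : U s(x, z1) = U s(x, z0) := (hB0u _ hz1D he2).trans hB0z
                have h4 : s(x, z1) ∈ (U s(x, z0)).edgeSet :=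
                  h3 ▸ (hU s(x, z1) (hxe z1 (hZv z1 hz1) (hzx z1 hz1))).2.1
                rw [hedge _ hz0D, hz0ctr] at h4
                obtain ⟨l'', hl'', hll2⟩ := h4
                rw [Sym2.eq_iff] at hll2
                rcases hll2 with ⟨h5, _⟩ | ⟨_, h6⟩
                · exact (hzx z0 hz0) h5.symm
                · have hlz0 : l = z0 := h2.trans h6
                  rw [hlz0] at hl
                  have hno := (hCL _ hz0D).1
                  rw [hz0ctr] at hno
                  exact hno hl
      · refine ⟨U e, ⟨Or.inl ⟨hB0D, hcA, fun z hz heq => hcB ⟨z, hz, heq⟩⟩, hB0e⟩, ?_⟩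
        rintro B' ⟨hB'mem, hB'e⟩
        rcases hB'mem with ⟨hB'D, _, _⟩ | rfl | ⟨z1, hz1, rfl⟩
        · exact hB0u B' hB'D hB'e
        · exfalso
          obtain ⟨z1, hz1, rfl⟩ := (hSxedge _).1 hB'e
          exact hcB ⟨z1, hz1,
            (hB0u _ (hzfacts z1 hz1).1 (hU s(x, z1) (hxe z1 (hZv z1 hz1) (hzx z1 hz1))).2.1).symm⟩
        · exfalso
          obtain ⟨l', hl', rfl⟩ := (hNedge z1 hz1 _).1 hB'e
          rcases Finset.mem_insert.1 hl' with rfl | hmm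
          · have hthis : s(z1, cst) ∈ Bst.edgeSet := (hBstedge _).2 ⟨z1, hz1, Sym2.eq_swap⟩
            exact hcA (hB0u Bst hBstD hthis).symm
          · have hz1D := (hzfacts z1 hz1).1
            have hthis : s(z1, l') ∈ (U s(x, z1)).edgeSet := by
              rw [hedge _ hz1D, (hzfacts z1 hz1).2.1]
              exact ⟨l', (Finset.mem_erase.1 hmm).2, rfl⟩
            exact hcB ⟨z1, hz1, (hB0u _ hz1D hthis).symm⟩
  · -- part 3 : every vertex is a center
    intro y hy
    by_cases hyx : y = x
    · subst hyx
      exact ⟨Sx, Or.inr (Or.inl rfl), isStarCenter_starOn hxZ hZne⟩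
    · by_cases hyZ : y ∈ Zf
      · exact ⟨NB y, Or.inr (Or.inr ⟨y, hyZ, rfl⟩),
          isStarCenter_starOn (hLzz y hyZ) (hLzne y hyZ)⟩
      · refine ⟨U s(x, y), Or.inl ⟨(hBc y hy hyx).1, ?_, ?_⟩, ?_⟩
        · intro heq
          have : s(x, y) ∈ Bst.edgeSet := heq ▸ (hU s(x, y) (hxe y hy hyx)).2.1
          obtain ⟨z, hz, hzz⟩ := (hBstedge _).1 this
          rw [Sym2.eq_iff] at hzz
          rcases hzz with ⟨h1, _⟩ | ⟨h1, h2⟩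
          · exact hcstx h1.symm
          · exact hxZ (h1 ▸ hz)
        · intro z hz heq
          have hyD := (hBc y hy hyx).1
          have : s(x, z) ∈ (U s(x, y)).edgeSet := heq ▸ (hU s(x, z) (hxe z (hZv z hz) (hzx z hz))).2.1
          rw [hedge _ hyD, (hBc y hy hyx).2.1] at this
          obtain ⟨l, hl, hll⟩ := this
          rw [Sym2.eq_iff] at hll
          rcases hll with ⟨h1, _⟩ | ⟨_, h2⟩
          · exact hyx h1.symm
          · exact hyZ (h2 ▸ hz)
        · have hyD := (hBc y hy hyx).1
          have hc := isStarCenter_starOn (hCL _ hyD).1 (hlvs_ne _ hyD)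
          rw [← (hCL _ hyD).2.2, (hBc y hy hyx).2.1] at hc
          exact hc
end

section
/- If there exists a down-link from a (K_v, C₄)-design to a (K_n, P₃)-design, then n ≥ v−1. -/
open SimpleGraph

/-- A down-link from a `(K_v,C₄)`-design to a `(K_n,P₃)`-design forces
`n ≥ v - 1`. -/
theorem stmt10 (v n : ℕ) (D D' : Set (SimpleGraph ℕ))
    (hD : IsDesign (Kon (Set.Iio v)) (cycleGraph 4) D)
    (hD' : IsDesign (Kon (Set.Iio n)) (pathGraph 3) D')
    (f : SimpleGraph ℕ → SimpleGraph ℕ) (hf : IsDownlink D D' f) :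
    v - 1 ≤ n := by
  by_contra hcon
  push_neg at hcon
  -- n and n+1 are two vertices of K_v not in Iio n
  have hn : n < v := by omega
  have hn1 : n + 1 < v := by omega
  have he : s(n, n+1) ∈ (Kon (Set.Iio v)).edgeSet := by
    simp only [SimpleGraph.mem_edgeSet, Kon]
    exact ⟨by omega, hn, hn1⟩
  obtain ⟨B, ⟨hBD, hBe⟩, -⟩ := hD.2 _ he
  have hBadj : B.Adj n (n+1) := hBe
  obtain ⟨-, ⟨ψ, hψ⟩, -⟩ := hD.1 B hBD
  obtain ⟨hfD', hfle⟩ := hf B hBD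
  obtain ⟨hfle', ⟨φ, hφ⟩, -⟩ := hD'.1 (f B) hfD'
  -- edges of the path
  have h01 : (f B).Adj (φ 0) (φ 1) := (hφ _ _).2 ⟨0, 1, pathGraph_adj.mpr (by decide), rfl, rfl⟩
  have h12 : (f B).Adj (φ 1) (φ 2) := (hφ _ _).2 ⟨1, 2, pathGraph_adj.mpr (by decide), rfl, rfl⟩
  -- path vertices are < n
  have hb01 := hfle' h01
  have hb12 := hfle' h12
  have hφ0n : φ 0 < n := (show φ 0 ≠ φ 1 ∧ φ 0 ∈ Set.Iio n ∧ φ 1 ∈ Set.Iio n from hb01).2.1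
  have hφ1n : φ 1 < n := (show φ 0 ≠ φ 1 ∧ φ 0 ∈ Set.Iio n ∧ φ 1 ∈ Set.Iio n from hb01).2.2
  have hφ2n : φ 2 < n := (show φ 1 ≠ φ 2 ∧ φ 1 ∈ Set.Iio n ∧ φ 2 ∈ Set.Iio n from hb12).2.2
  -- all five vertices lie in the range of ψ
  have hrange : ∀ a b : ℕ, B.Adj a b → a ∈ Finset.image ψ Finset.univ := by
    intro a b hab
    obtain ⟨p, q, -, hp, -⟩ := (hψ a b).1 hab
    simp [← hp]
  have r0 := hrange _ _ (hfle h01)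
  have r1 := hrange _ _ (hfle h12)
  have r2 := hrange _ _ ((hfle h12).symm)
  have rn := hrange _ _ hBadj
  have rn1 := hrange _ _ hBadj.symm
  -- distinctness
  have d01 : φ 0 ≠ φ 1 := fun h => by simpa using φ.injective h
  have d02 : φ 0 ≠ φ 2 := fun h => by simpa using φ.injective h
  have d12 : φ 1 ≠ φ 2 := fun h => by simpa using φ.injective h
  -- the five-element set
  have hsub : ({φ 0, φ 1, φ 2, n, n+1} : Finset ℕ) ⊆ Finset.image ψ Finset.univ := by
    intro z hz
    simp only [Finset.mem_insert, Finset.mem_singleton] at hz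
    rcases hz with h | h | h | h | h <;> subst h <;> assumption
  have hle : ({φ 0, φ 1, φ 2, n, n+1} : Finset ℕ).card ≤ 4 := by
    refine (Finset.card_le_card hsub).trans (Finset.card_image_le.trans ?_)
    simp
  have hcard : ({φ 0, φ 1, φ 2, n, n+1} : Finset ℕ).card = 5 := by
    rw [Finset.card_insert_of_notMem (by simp only [Finset.mem_insert, Finset.mem_singleton]; push_neg; omega),
        Finset.card_insert_of_notMem (by simp only [Finset.mem_insert, Finset.mem_singleton]; push_neg; omega),
        Finset.card_insert_of_notMem (by simp only [Finset.mem_insert, Finset.mem_singleton]; push_neg; omega),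
        Finset.card_insert_of_notMem (by simp only [Finset.mem_singleton]; omega),
        Finset.card_singleton]
  omega
end

section
/- For every admissible v (i.e., v ≡ 1 mod 8, v ≥ 8) and every (K_v,C₄)-design B, and for every n ≥ v−1 with n ≡ 0,1 (mod 4), B can be down-linked to a (K_n,P₃)-design. In particular, fixing any vertex x of K_v, deleting from each 4-cycle through x the two edges at x yields a P₃, and the remaining blocks split into two P₃'s each, giving a down-link to a (K_{v−1},P₃)-design. -/
open SimpleGraph

def P3 (a b c : ℕ) : SimpleGraph ℕ := fromEdgeSet {s(a,b), s(b,c)}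

lemma P3_adj {a b c x y : ℕ} :
    (P3 a b c).Adj x y ↔ (s(x,y) = s(a,b) ∨ s(x,y) = s(b,c)) ∧ x ≠ y := by
  simp [P3, fromEdgeSet_adj]

lemma P3_edgeSet {a b c : ℕ} (h1 : a ≠ b) (h2 : b ≠ c) :
    (P3 a b c).edgeSet = {s(a,b), s(b,c)} := by
  rw [P3, edgeSet_fromEdgeSet]
  ext e
  simp only [Set.mem_diff, Set.mem_insert_iff, Set.mem_singleton_iff, Set.mem_setOf_eq,
    and_iff_left_iff_imp]
  rintro (rfl | rfl) hd
  · exact h1 (Sym2.isDiag_iff_proj_eq |>.mp hd)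
  · exact h2 (Sym2.isDiag_iff_proj_eq |>.mp hd)

lemma P3_copy {a b c : ℕ} (h1 : a ≠ b) (h2 : b ≠ c) (h3 : a ≠ c) :
    IsCopy (pathGraph 3) (P3 a b c) := by
  refine ⟨⟨![a,b,c], ?_⟩, ?_⟩
  · intro i j hij
    fin_cases i <;> fin_cases j <;> simp_all <;> omega
  · intro x y
    rw [P3_adj]
    constructor
    · rintro ⟨(h | h), hxy⟩ <;> rw [Sym2.eq_iff] at h <;>
        rcases h with ⟨rfl, rfl⟩ | ⟨rfl, rfl⟩
      · exact ⟨0, 1, by simp [pathGraph_adj], rfl, rfl⟩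
      · exact ⟨1, 0, by simp [pathGraph_adj], rfl, rfl⟩
      · exact ⟨1, 2, by simp [pathGraph_adj], rfl, rfl⟩
      · exact ⟨2, 1, by simp [pathGraph_adj], rfl, rfl⟩
    · rintro ⟨i, j, hij, rfl, rfl⟩
      rw [pathGraph_adj] at hij
      fin_cases i <;> fin_cases j <;> simp_all [Sym2.eq_iff] <;> tauto

lemma P3_mem_edgeSet {a b c : ℕ} (h1 : a ≠ b) (h2 : b ≠ c) {e : Sym2 ℕ} :
    e ∈ (P3 a b c).edgeSet ↔ e = s(a,b) ∨ e = s(b,c) := by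
  rw [P3_edgeSet h1 h2]; simp

lemma P3_nonempty {a b c : ℕ} (h1 : a ≠ b) (h2 : b ≠ c) :
    (P3 a b c).edgeSet.Nonempty :=
  ⟨s(a,b), by rw [P3_mem_edgeSet h1 h2]; left; rfl⟩

lemma P3_le_Kon {a b c n : ℕ} (ha : a < n) (hb : b < n) (hc : c < n) :
    P3 a b c ≤ Kon (Set.Iio n) := by
  intro x y hxy
  rw [P3_adj] at hxy
  obtain ⟨h | h, hne⟩ := hxy <;> rw [Sym2.eq_iff] at h <;>
    rcases h with ⟨rfl, rfl⟩ | ⟨rfl, rfl⟩ <;>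
    exact ⟨hne, by simpa using ‹_ < n›, by simpa using ‹_ < n›⟩

lemma P3_le_of_edges {a b c : ℕ} {B : SimpleGraph ℕ}
    (h1 : s(a,b) ∈ B.edgeSet) (h2 : s(b,c) ∈ B.edgeSet) :
    P3 a b c ≤ B := by
  intro x y hxy
  rw [P3_adj] at hxy
  obtain ⟨h | h, hne⟩ := hxy <;> rw [Sym2.eq_iff] at h <;>
    rcases h with ⟨rfl, rfl⟩ | ⟨rfl, rfl⟩
  · exact h1
  · exact (B.adj_symm h1)
  · exact h2
  · exact (B.adj_symm h2)

lemma cyc4_adj (a b : Fin 4) :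
    (cycleGraph 4).Adj a b ↔
      (a = 0 ∧ b = 1) ∨ (a = 1 ∧ b = 0) ∨ (a = 1 ∧ b = 2) ∨ (a = 2 ∧ b = 1) ∨
      (a = 2 ∧ b = 3) ∨ (a = 3 ∧ b = 2) ∨ (a = 3 ∧ b = 0) ∨ (a = 0 ∧ b = 3) := by
  revert a b; decide

lemma quad_edgeSet {B : SimpleGraph ℕ} (φ : Fin 4 ↪ ℕ)
    (hφ : ∀ x y, B.Adj x y ↔ ∃ a b, (cycleGraph 4).Adj a b ∧ φ a = x ∧ φ b = y) :
    B.edgeSet = {s(φ 0, φ 1), s(φ 1, φ 2), s(φ 2, φ 3), s(φ 3, φ 0)} := by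
  ext e
  induction e with
  | _ x y =>
    rw [mem_edgeSet, hφ]
    simp only [Set.mem_insert_iff, Set.mem_singleton_iff, Sym2.eq_iff]
    constructor
    · rintro ⟨a, b, hab, rfl, rfl⟩
      rw [cyc4_adj] at hab
      rcases hab with ⟨rfl,rfl⟩|⟨rfl,rfl⟩|⟨rfl,rfl⟩|⟨rfl,rfl⟩|⟨rfl,rfl⟩|⟨rfl,rfl⟩|⟨rfl,rfl⟩|⟨rfl,rfl⟩ <;> tauto
    · rintro ((⟨rfl,rfl⟩|⟨rfl,rfl⟩)|(⟨rfl,rfl⟩|⟨rfl,rfl⟩)|(⟨rfl,rfl⟩|⟨rfl,rfl⟩)|(⟨rfl,rfl⟩|⟨rfl,rfl⟩))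
      · exact ⟨0, 1, by decide, rfl, rfl⟩
      · exact ⟨1, 0, by decide, rfl, rfl⟩
      · exact ⟨1, 2, by decide, rfl, rfl⟩
      · exact ⟨2, 1, by decide, rfl, rfl⟩
      · exact ⟨2, 3, by decide, rfl, rfl⟩
      · exact ⟨3, 2, by decide, rfl, rfl⟩
      · exact ⟨3, 0, by decide, rfl, rfl⟩
      · exact ⟨0, 3, by decide, rfl, rfl⟩

open Classical in
noncomputable def fmap (m : ℕ) (B : SimpleGraph ℕ) : SimpleGraph ℕ :=
  if h : IsCopy (cycleGraph 4) B then
    if h.choose 0 = m then P3 (h.choose 1) (h.choose 2) (h.choose 3)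
    else if h.choose 1 = m then P3 (h.choose 2) (h.choose 3) (h.choose 0)
    else if h.choose 2 = m then P3 (h.choose 3) (h.choose 0) (h.choose 1)
    else P3 (h.choose 0) (h.choose 1) (h.choose 2)
  else ⊥

open Classical in
noncomputable def gmap (m : ℕ) (B : SimpleGraph ℕ) : SimpleGraph ℕ :=
  if h : IsCopy (cycleGraph 4) B then
    if h.choose 0 = m then P3 (h.choose 1) (h.choose 2) (h.choose 3)
    else if h.choose 1 = m then P3 (h.choose 2) (h.choose 3) (h.choose 0)
    else if h.choose 2 = m then P3 (h.choose 3) (h.choose 0) (h.choose 1)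
    else if h.choose 3 = m then P3 (h.choose 0) (h.choose 1) (h.choose 2)
    else P3 (h.choose 2) (h.choose 3) (h.choose 0)
  else ⊥

lemma maps_spec (m : ℕ) {B : SimpleGraph ℕ} (h : IsCopy (cycleGraph 4) B) :
    ∃ p q r p' q' r' : ℕ,
      fmap m B = P3 p q r ∧ gmap m B = P3 p' q' r' ∧
      (p ≠ q ∧ q ≠ r ∧ p ≠ r) ∧ (p' ≠ q' ∧ q' ≠ r' ∧ p' ≠ r') ∧
      (p ≠ m ∧ q ≠ m ∧ r ≠ m) ∧ (p' ≠ m ∧ q' ≠ m ∧ r' ≠ m) ∧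
      (s(p,q) ∈ B.edgeSet ∧ s(q,r) ∈ B.edgeSet ∧
        s(p',q') ∈ B.edgeSet ∧ s(q',r') ∈ B.edgeSet) ∧
      (∀ e ∈ B.edgeSet, ¬ (m ∈ e) →
        e = s(p,q) ∨ e = s(q,r) ∨ e = s(p',q') ∨ e = s(q',r')) ∧
      (fmap m B = gmap m B ∨
        (s(p,q) ≠ s(p',q') ∧ s(p,q) ≠ s(q',r') ∧ s(q,r) ≠ s(p',q') ∧ s(q,r) ≠ s(q',r'))) := by
  have hES := quad_edgeSet h.choose h.choose_spec
  set φ := h.choose with hφ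
  have hne : ∀ i j : Fin 4, i ≠ j → φ i ≠ φ j := fun i j hij => φ.injective.ne hij
  rw [fmap, gmap, dif_pos h, dif_pos h, ← hφ]
  split_ifs with h0 h1 h2 h3
  · refine ⟨φ 1, φ 2, φ 3, φ 1, φ 2, φ 3, rfl, rfl,
      ⟨hne 1 2 (by decide), hne 2 3 (by decide), hne 1 3 (by decide)⟩,
      ⟨hne 1 2 (by decide), hne 2 3 (by decide), hne 1 3 (by decide)⟩,
      ⟨h0 ▸ hne 1 0 (by decide), h0 ▸ hne 2 0 (by decide), h0 ▸ hne 3 0 (by decide)⟩,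
      ⟨h0 ▸ hne 1 0 (by decide), h0 ▸ hne 2 0 (by decide), h0 ▸ hne 3 0 (by decide)⟩,
      ⟨by rw [hES]; simp, by rw [hES]; simp, by rw [hES]; simp, by rw [hES]; simp⟩,
      ?_, Or.inl rfl⟩
    intro e he hm
    rw [hES] at he
    simp only [Set.mem_insert_iff, Set.mem_singleton_iff] at he
    rcases he with rfl | rfl | rfl | rfl <;> simp only [Sym2.mem_iff] at hm <;> tauto
  · refine ⟨φ 2, φ 3, φ 0, φ 2, φ 3, φ 0, rfl, rfl,
      ⟨hne 2 3 (by decide), hne 3 0 (by decide), hne 2 0 (by decide)⟩,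
      ⟨hne 2 3 (by decide), hne 3 0 (by decide), hne 2 0 (by decide)⟩,
      ⟨h1 ▸ hne 2 1 (by decide), h1 ▸ hne 3 1 (by decide), h1 ▸ hne 0 1 (by decide)⟩,
      ⟨h1 ▸ hne 2 1 (by decide), h1 ▸ hne 3 1 (by decide), h1 ▸ hne 0 1 (by decide)⟩,
      ⟨by rw [hES]; simp, by rw [hES]; simp, by rw [hES]; simp, by rw [hES]; simp⟩,
      ?_, Or.inl rfl⟩
    intro e he hm
    rw [hES] at he
    simp only [Set.mem_insert_iff, Set.mem_singleton_iff] at he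
    rcases he with rfl | rfl | rfl | rfl <;> simp only [Sym2.mem_iff] at hm <;> tauto
  · refine ⟨φ 3, φ 0, φ 1, φ 3, φ 0, φ 1, rfl, rfl,
      ⟨hne 3 0 (by decide), hne 0 1 (by decide), hne 3 1 (by decide)⟩,
      ⟨hne 3 0 (by decide), hne 0 1 (by decide), hne 3 1 (by decide)⟩,
      ⟨h2 ▸ hne 3 2 (by decide), h2 ▸ hne 0 2 (by decide), h2 ▸ hne 1 2 (by decide)⟩,
      ⟨h2 ▸ hne 3 2 (by decide), h2 ▸ hne 0 2 (by decide), h2 ▸ hne 1 2 (by decide)⟩,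
      ⟨by rw [hES]; simp, by rw [hES]; simp, by rw [hES]; simp, by rw [hES]; simp⟩,
      ?_, Or.inl rfl⟩
    intro e he hm
    rw [hES] at he
    simp only [Set.mem_insert_iff, Set.mem_singleton_iff] at he
    rcases he with rfl | rfl | rfl | rfl <;> simp only [Sym2.mem_iff] at hm <;> tauto
  · refine ⟨φ 0, φ 1, φ 2, φ 0, φ 1, φ 2, rfl, rfl,
      ⟨hne 0 1 (by decide), hne 1 2 (by decide), hne 0 2 (by decide)⟩,
      ⟨hne 0 1 (by decide), hne 1 2 (by decide), hne 0 2 (by decide)⟩,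
      ⟨h0, h1, h2⟩, ⟨h0, h1, h2⟩,
      ⟨by rw [hES]; simp, by rw [hES]; simp, by rw [hES]; simp, by rw [hES]; simp⟩,
      ?_, Or.inl rfl⟩
    intro e he hm
    rw [hES] at he
    simp only [Set.mem_insert_iff, Set.mem_singleton_iff] at he
    rcases he with rfl | rfl | rfl | rfl <;> simp only [Sym2.mem_iff] at hm <;> tauto
  · refine ⟨φ 0, φ 1, φ 2, φ 2, φ 3, φ 0, rfl, rfl,
      ⟨hne 0 1 (by decide), hne 1 2 (by decide), hne 0 2 (by decide)⟩,
      ⟨hne 2 3 (by decide), hne 3 0 (by decide), hne 2 0 (by decide)⟩,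
      ⟨h0, h1, h2⟩, ⟨h2, h3, h0⟩,
      ⟨by rw [hES]; simp, by rw [hES]; simp, by rw [hES]; simp, by rw [hES]; simp⟩,
      ?_, Or.inr ⟨?_, ?_, ?_, ?_⟩⟩
    · intro e he hm
      rw [hES] at he
      simp only [Set.mem_insert_iff, Set.mem_singleton_iff] at he
      rcases he with rfl | rfl | rfl | rfl <;> tauto
    all_goals
      intro hEq
      rw [Sym2.eq_iff] at hEq
      rcases hEq with ⟨ha, hb⟩ | ⟨ha, hb⟩ <;>
        first
          | exact absurd ha (hne _ _ (by decide))
          | exact absurd hb (hne _ _ (by decide))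

def Cb (m n : ℕ) : Set (SimpleGraph ℕ) :=
  ({G | ∃ b k, m ≤ b ∧ b < n ∧ b % 2 = 0 ∧ 2*k+1 < b ∧ G = P3 (2*k) b (2*k+1)} ∪
   {G | ∃ b k, m ≤ b ∧ b < n ∧ b % 2 = 1 ∧ 2*k+2 < b ∧ G = P3 (2*k+1) b (2*k+2)}) ∪
  {G | ∃ j, m+4*j+3 < n ∧ G = P3 (m+4*j+1) 0 (m+4*j+3)}

lemma Cb_spec {m n : ℕ} (hm : 0 < m) :
    ∀ G ∈ Cb m n, ∃ p q r : ℕ,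
      G = P3 p q r ∧ p ≠ q ∧ q ≠ r ∧ p ≠ r ∧ p < n ∧ q < n ∧ r < n ∧
      (∀ e ∈ G.edgeSet, ∃ y ∈ e, m ≤ y) := by
  rintro G ((⟨b,k,hbm,hbn,hbp,hbk,rfl⟩|⟨b,k,hbm,hbn,hbp,hbk,rfl⟩)|⟨j,hj,rfl⟩)
  · refine ⟨2*k, b, 2*k+1, rfl, by omega, by omega, by omega, by omega, by omega, by omega, ?_⟩
    intro e he
    rw [P3_mem_edgeSet (by omega) (by omega)] at he
    rcases he with rfl | rfl
    · exact ⟨b, by simp [Sym2.mem_iff], hbm⟩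
    · exact ⟨b, by simp [Sym2.mem_iff], hbm⟩
  · refine ⟨2*k+1, b, 2*k+2, rfl, by omega, by omega, by omega, by omega, by omega, by omega, ?_⟩
    intro e he
    rw [P3_mem_edgeSet (by omega) (by omega)] at he
    rcases he with rfl | rfl
    · exact ⟨b, by simp [Sym2.mem_iff], hbm⟩
    · exact ⟨b, by simp [Sym2.mem_iff], hbm⟩
  · refine ⟨m+4*j+1, 0, m+4*j+3, rfl, by omega, by omega, by omega, by omega, by omega, by omega, ?_⟩
    intro e he
    rw [P3_mem_edgeSet (by omega) (by omega)] at he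
    rcases he with rfl | rfl
    · exact ⟨m+4*j+1, by simp [Sym2.mem_iff], by omega⟩
    · exact ⟨m+4*j+3, by simp [Sym2.mem_iff], by omega⟩

lemma Cb_cover {m n : ℕ} (hm : 0 < m) (hm4 : m % 4 = 0) (hn4 : n % 4 = 0 ∨ n % 4 = 1) :
    ∀ a b : ℕ, a < b → m ≤ b → b < n → ∃ G ∈ Cb m n, s(a,b) ∈ G.edgeSet := by
  intro a b hab hmb hbn
  rcases Nat.mod_two_eq_zero_or_one b with hb | hb
  · refine ⟨P3 (2*(a/2)) b (2*(a/2)+1), Or.inl (Or.inl ⟨b, a/2, hmb, hbn, by omega, by omega, rfl⟩), ?_⟩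
    rw [P3_mem_edgeSet (by omega) (by omega)]
    rcases Nat.mod_two_eq_zero_or_one a with ha | ha
    · left; rw [Sym2.eq_iff]; omega
    · right; rw [Sym2.eq_swap]; rw [Sym2.eq_iff]; omega
  · rcases Nat.eq_zero_or_pos a with rfl | ha0
    · have h4 : (b - m) % 4 = 1 ∨ (b - m) % 4 = 3 := by omega
      rcases h4 with ht | ht
      · refine ⟨P3 (m+4*((b-m)/4)+1) 0 (m+4*((b-m)/4)+3), Or.inr ⟨(b-m)/4, by omega, rfl⟩, ?_⟩
        rw [P3_mem_edgeSet (by omega) (by omega)]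
        left; rw [Sym2.eq_swap]; rw [Sym2.eq_iff]; omega
      · refine ⟨P3 (m+4*((b-m)/4)+1) 0 (m+4*((b-m)/4)+3), Or.inr ⟨(b-m)/4, by omega, rfl⟩, ?_⟩
        rw [P3_mem_edgeSet (by omega) (by omega)]
        right; rw [Sym2.eq_iff]; omega
    · refine ⟨P3 (2*((a-1)/2)+1) b (2*((a-1)/2)+2),
        Or.inl (Or.inr ⟨b, (a-1)/2, hmb, hbn, by omega, by omega, rfl⟩), ?_⟩
      rw [P3_mem_edgeSet (by omega) (by omega)]
      rcases Nat.mod_two_eq_zero_or_one a with ha | ha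
      · right; rw [Sym2.eq_swap]; rw [Sym2.eq_iff]; omega
      · left; rw [Sym2.eq_iff]; omega

lemma Cb_unique {m n : ℕ} (hm : 0 < m) (hm2 : m % 2 = 0) :
    ∀ G1 ∈ Cb m n, ∀ G2 ∈ Cb m n, ∀ e, e ∈ G1.edgeSet → e ∈ G2.edgeSet → G1 = G2 := by
  rintro G1 ((⟨b,k,hbm,hbn,hbp,hbk,rfl⟩|⟨b,k,hbm,hbn,hbp,hbk,rfl⟩)|⟨j,hj,rfl⟩) G2
      ((⟨b',k',hbm',hbn',hbp',hbk',rfl⟩|⟨b',k',hbm',hbn',hbp',hbk',rfl⟩)|⟨j',hj',rfl⟩)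
      e he1 he2 <;>
    rw [P3_mem_edgeSet (by omega) (by omega)] at he1 he2 <;>
    rcases he1 with rfl | rfl <;> rcases he2 with h | h <;>
    rw [Sym2.eq_iff] at h <;> rcases h with ⟨h1, h2⟩ | ⟨h1, h2⟩ <;>
    first | (exfalso; omega) | (congr 1 <;> omega)

lemma Kon_mem_edgeSet {n : ℕ} {e : Sym2 ℕ} :
    e ∈ (Kon (Set.Iio n)).edgeSet ↔ ∃ a b, a < b ∧ b < n ∧ e = s(a,b) := by
  induction e with
  | _ x y =>
    rw [mem_edgeSet]
    constructor
    · rintro ⟨hxy, hx, hy⟩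
      simp only [Set.mem_Iio] at hx hy
      rcases Nat.lt_or_ge x y with h | h
      · exact ⟨x, y, h, hy, rfl⟩
      · exact ⟨y, x, by omega, hx, Sym2.eq_swap⟩
    · rintro ⟨a, b, hab, hbn, h⟩
      rw [Sym2.eq_iff] at h
      rcases h with ⟨rfl, rfl⟩ | ⟨rfl, rfl⟩ <;>
        exact ⟨by omega, Set.mem_Iio.mpr (by omega), Set.mem_Iio.mpr (by omega)⟩

lemma endpoints_lt {B : SimpleGraph ℕ} {v p q : ℕ} (hle : B ≤ Kon (Set.Iio v))
    (h : s(p,q) ∈ B.edgeSet) : p < v ∧ q < v ∧ p ≠ q := by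
  have := hle (B.mem_edgeSet.mp h)
  obtain ⟨hne, hp, hq⟩ := this
  exact ⟨Set.mem_Iio.mp hp, Set.mem_Iio.mp hq, hne⟩


/-- For every admissible `v ≡ 1 (mod 8)`, `v ≥ 8`, every `(K_v,C₄)`-design can
be down-linked to a `(K_n,P₃)`-design for every `n ≥ v - 1` with
`n ≡ 0, 1 (mod 4)`. -/
theorem stmt11 (v : ℕ) (hv1 : v % 8 = 1) (hv8 : 8 ≤ v)
    (D : Set (SimpleGraph ℕ)) (hD : IsDesign (Kon (Set.Iio v)) (cycleGraph 4) D)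
    (n : ℕ) (hn : v - 1 ≤ n) (hn4 : n % 4 = 0 ∨ n % 4 = 1) :
    ∃ D' : Set (SimpleGraph ℕ),
      IsDesign (Kon (Set.Iio n)) (pathGraph 3) D' ∧ ∃ f, IsDownlink D D' f := by
  obtain ⟨m, hmdef⟩ : ∃ m, m = v - 1 := ⟨v - 1, rfl⟩
  have hmn : m ≤ n := by omega
  have hm0 : 0 < m := by omega
  have hm8 : m % 8 = 0 := by omega
  have hmv : v = m + 1 := by omega
  clear hn hmdef
  refine ⟨(fmap m '' D ∪ gmap m '' D) ∪ Cb m n, ⟨?_, ?_⟩, fmap m, ?_⟩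
  · -- all blocks are proper
    rintro G ((⟨B, hB, rfl⟩ | ⟨B, hB, rfl⟩) | hC)
    · obtain ⟨hle, hcopy, -⟩ := hD.1 B hB
      obtain ⟨p, q, r, p', q', r', hf, -, ⟨d1,d2,d3⟩, -, ⟨e1,e2,e3⟩, -,
        ⟨m1, m2, -, -⟩, -, -⟩ := maps_spec m hcopy
      obtain ⟨hp, hq, -⟩ := endpoints_lt hle m1
      obtain ⟨-, hr, -⟩ := endpoints_lt hle m2
      rw [hf]
      refine ⟨P3_le_Kon ?_ ?_ ?_, P3_copy d1 d2 d3, P3_nonempty d1 d2⟩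
      · clear * - hp e1 hmv hmn; omega
      · clear * - hq e2 hmv hmn; omega
      · clear * - hr e3 hmv hmn; omega
    · obtain ⟨hle, hcopy, -⟩ := hD.1 B hB
      obtain ⟨p, q, r, p', q', r', -, hg, -, ⟨d1,d2,d3⟩, -, ⟨e1,e2,e3⟩,
        ⟨-, -, m1, m2⟩, -, -⟩ := maps_spec m hcopy
      obtain ⟨hp, hq, -⟩ := endpoints_lt hle m1
      obtain ⟨-, hr, -⟩ := endpoints_lt hle m2
      rw [hg]
      refine ⟨P3_le_Kon ?_ ?_ ?_, P3_copy d1 d2 d3, P3_nonempty d1 d2⟩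
      · clear * - hp e1 hmv hmn; omega
      · clear * - hq e2 hmv hmn; omega
      · clear * - hr e3 hmv hmn; omega
    · obtain ⟨p, q, r, rfl, d1, d2, d3, hp, hq, hr, -⟩ := Cb_spec hm0 _ hC
      exact ⟨P3_le_Kon hp hq hr, P3_copy d1 d2 d3, P3_nonempty d1 d2⟩
  · -- partition
    intro e he
    obtain ⟨a, b, hab, hbn, rfl⟩ := Kon_mem_edgeSet.mp he
    rcases Nat.lt_or_ge b m with hbm | hbm
    · -- edge inside K_m : comes from a block of D
      have heKv : s(a,b) ∈ (Kon (Set.Iio v)).edgeSet :=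
        Kon_mem_edgeSet.mpr ⟨a, b, hab, by clear * - hbm hmv; omega, rfl⟩
      obtain ⟨B₀, ⟨hB₀D, hB₀e⟩, hB₀u⟩ := hD.2 _ heKv
      obtain ⟨hle, hcopy, -⟩ := hD.1 B₀ hB₀D
      obtain ⟨p, q, r, p', q', r', hf, hg, ⟨d1,d2,d3⟩, ⟨d1',d2',d3'⟩, -, -,
        ⟨m1, m2, m1', m2'⟩, hcov, hdisj⟩ := maps_spec m hcopy
      have hmnot : ¬ (m ∈ s(a,b)) := by
        rw [Sym2.mem_iff]; clear * - hab hbm; omega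
      have hef : s(a,b) ∈ (fmap m B₀).edgeSet ↔ (s(a,b) = s(p,q) ∨ s(a,b) = s(q,r)) := by
        rw [hf, P3_mem_edgeSet d1 d2]
      have heg : s(a,b) ∈ (gmap m B₀).edgeSet ↔ (s(a,b) = s(p',q') ∨ s(a,b) = s(q',r')) := by
        rw [hg, P3_mem_edgeSet d1' d2']
      have hfg : s(a,b) ∈ (fmap m B₀).edgeSet → s(a,b) ∈ (gmap m B₀).edgeSet →
          fmap m B₀ = gmap m B₀ := by
        intro h1 h2
        rcases hdisj with h | ⟨n1, n2, n3, n4⟩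
        · exact h
        · rw [hef] at h1; rw [heg] at h2
          rcases h1 with h1 | h1 <;> rcases h2 with h2 | h2 <;>
            exfalso <;> [exact n1 (h1 ▸ h2); exact n2 (h1 ▸ h2);
              exact n3 (h1 ▸ h2); exact n4 (h1 ▸ h2)]
      have key : ∀ G', G' ∈ (fmap m '' D ∪ gmap m '' D) ∪ Cb m n → s(a,b) ∈ G'.edgeSet →
          G' = fmap m B₀ ∨ G' = gmap m B₀ := by
        rintro G' ((⟨B₁, hB₁, rfl⟩ | ⟨B₁, hB₁, rfl⟩) | hC) heG'
        · obtain ⟨hle₁, hcopy₁, -⟩ := hD.1 B₁ hB₁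
          obtain ⟨p₁, q₁, r₁, -, -, -, hf₁, -, ⟨e1,e2,-⟩, -, -, -, ⟨n1, n2, -, -⟩, -, -⟩ :=
            maps_spec m hcopy₁
          have hmem : s(a,b) ∈ B₁.edgeSet := by
            rw [hf₁, P3_mem_edgeSet e1 e2] at heG'
            rcases heG' with h | h <;> rw [h] <;> [exact n1; exact n2]
          have hBeq : B₁ = B₀ := hB₀u B₁ ⟨hB₁, hmem⟩
          left; rw [hBeq]
        · obtain ⟨hle₁, hcopy₁, -⟩ := hD.1 B₁ hB₁
          obtain ⟨p₁, q₁, r₁, p₁', q₁', r₁', -, hg₁, -, ⟨e1,e2,-⟩, -, -, ⟨-, -, n1, n2⟩, -, -⟩ :=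
            maps_spec m hcopy₁
          have hmem : s(a,b) ∈ B₁.edgeSet := by
            rw [hg₁, P3_mem_edgeSet e1 e2] at heG'
            rcases heG' with h | h <;> rw [h] <;> [exact n1; exact n2]
          have hBeq : B₁ = B₀ := hB₀u B₁ ⟨hB₁, hmem⟩
          right; rw [hBeq]
        · obtain ⟨p₁, q₁, r₁, rfl, e1, e2, -, -, -, -, hhigh⟩ := Cb_spec hm0 _ hC
          obtain ⟨y, hy, hmy⟩ := hhigh _ heG'
          rw [Sym2.mem_iff] at hy
          exfalso
          rcases hy with rfl | rfl <;> (clear * - hmy hab hbm; omega)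
      rcases hcov _ hB₀e hmnot with h | h | h | h
      · refine ⟨fmap m B₀, ⟨Or.inl (Or.inl ⟨B₀, hB₀D, rfl⟩), hef.mpr (Or.inl h)⟩, ?_⟩
        rintro G' ⟨hG', heG'⟩
        rcases key G' hG' heG' with rfl | rfl
        · rfl
        · exact (hfg (hef.mpr (Or.inl h)) heG').symm
      · refine ⟨fmap m B₀, ⟨Or.inl (Or.inl ⟨B₀, hB₀D, rfl⟩), hef.mpr (Or.inr h)⟩, ?_⟩
        rintro G' ⟨hG', heG'⟩
        rcases key G' hG' heG' with rfl | rfl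
        · rfl
        · exact (hfg (hef.mpr (Or.inr h)) heG').symm
      · refine ⟨gmap m B₀, ⟨Or.inl (Or.inr ⟨B₀, hB₀D, rfl⟩), heg.mpr (Or.inl h)⟩, ?_⟩
        rintro G' ⟨hG', heG'⟩
        rcases key G' hG' heG' with rfl | rfl
        · exact hfg heG' (heg.mpr (Or.inl h))
        · rfl
      · refine ⟨gmap m B₀, ⟨Or.inl (Or.inr ⟨B₀, hB₀D, rfl⟩), heg.mpr (Or.inr h)⟩, ?_⟩
        rintro G' ⟨hG', heG'⟩
        rcases key G' hG' heG' with rfl | rfl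
        · exact hfg heG' (heg.mpr (Or.inr h))
        · rfl
    · -- edge with high endpoint : comes from Cb
      obtain ⟨G₀, hG₀, heG₀⟩ := Cb_cover hm0 (by clear * - hm8; omega) hn4 a b hab hbm hbn
      refine ⟨G₀, ⟨Or.inr hG₀, heG₀⟩, ?_⟩
      rintro G' ⟨hG', heG'⟩
      rcases hG' with (⟨B₁, hB₁, rfl⟩ | ⟨B₁, hB₁, rfl⟩) | hC
      · obtain ⟨hle₁, hcopy₁, -⟩ := hD.1 B₁ hB₁
        obtain ⟨p₁, q₁, r₁, -, -, -, hf₁, -, ⟨e1,e2,-⟩, -, ⟨k1,k2,k3⟩, -, ⟨n1, n2, -, -⟩, -, -⟩ :=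
          maps_spec m hcopy₁
        exfalso
        rw [hf₁, P3_mem_edgeSet e1 e2] at heG'
        rcases heG' with h | h <;> rw [Sym2.eq_iff] at h <;> rcases h with ⟨h1, h2⟩ | ⟨h1, h2⟩
        · obtain ⟨hp, hq, -⟩ := endpoints_lt hle₁ n1
          clear * - hp hq h1 h2 k1 k2 hbm hmv hab; omega
        · obtain ⟨hp, hq, -⟩ := endpoints_lt hle₁ n1
          clear * - hp hq h1 h2 k1 k2 hbm hmv hab; omega
        · obtain ⟨hp, hq, -⟩ := endpoints_lt hle₁ n2
          clear * - hp hq h1 h2 k2 k3 hbm hmv hab; omega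
        · obtain ⟨hp, hq, -⟩ := endpoints_lt hle₁ n2
          clear * - hp hq h1 h2 k2 k3 hbm hmv hab; omega
      · obtain ⟨hle₁, hcopy₁, -⟩ := hD.1 B₁ hB₁
        obtain ⟨p₁, q₁, r₁, p₁', q₁', r₁', -, hg₁, -, ⟨e1,e2,-⟩, -, ⟨k1,k2,k3⟩,
          ⟨-, -, n1, n2⟩, -, -⟩ := maps_spec m hcopy₁
        exfalso
        rw [hg₁, P3_mem_edgeSet e1 e2] at heG'
        rcases heG' with h | h <;> rw [Sym2.eq_iff] at h <;> rcases h with ⟨h1, h2⟩ | ⟨h1, h2⟩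
        · obtain ⟨hp, hq, -⟩ := endpoints_lt hle₁ n1
          clear * - hp hq h1 h2 k1 k2 hbm hmv hab; omega
        · obtain ⟨hp, hq, -⟩ := endpoints_lt hle₁ n1
          clear * - hp hq h1 h2 k1 k2 hbm hmv hab; omega
        · obtain ⟨hp, hq, -⟩ := endpoints_lt hle₁ n2
          clear * - hp hq h1 h2 k2 k3 hbm hmv hab; omega
        · obtain ⟨hp, hq, -⟩ := endpoints_lt hle₁ n2
          clear * - hp hq h1 h2 k2 k3 hbm hmv hab; omega
      · exact Cb_unique hm0 (by clear * - hm8; omega) G' hC G₀ hG₀ _ heG' heG₀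
  · -- downlink
    intro B hB
    obtain ⟨hle, hcopy, -⟩ := hD.1 B hB
    obtain ⟨p, q, r, p', q', r', hf, -, -, -, -, -, ⟨m1, m2, -, -⟩, -, -⟩ := maps_spec m hcopy
    exact ⟨Or.inl (Or.inl ⟨B, hB, rfl⟩), hf ▸ P3_le_of_edges m1 m2⟩
end

section
/- For every t ≥ 1, the family F = { [2i−1, 3t+i, 0 ⋈ 2i] : i = 1,…,t } of kites with vertices in Z_{8t+1} is a (Z_{8t+1}, {0}, D, 1)-difference family: the list of differences x−y over ordered pairs (x,y) of adjacent vertices of kites in F covers each nonzero element of Z_{8t+1} exactly once. -/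
open SimpleGraph

/-- The list of differences of the kite `[a, b, c ⋈ d]`, whose edges are
`{c,a}, {c,b}, {c,d}, {a,b}`. -/
def kiteDiffs {G : Type*} [AddCommGroup G] (a b c d : G) : Multiset G :=
  {c - a, a - c, c - b, b - c, c - d, d - c, a - b, b - a}

section
variable {m : ℕ} [NeZero m]

lemma castEqIff (g : ZMod m) (n : ℕ) (hn : n < m) : g = (n : ZMod m) ↔ n = g.val := by
  constructor
  · intro h; rw [h, ZMod.val_cast_of_lt hn]
  · intro h; rw [h, ZMod.natCast_zmod_val]

lemma negCast (k : ℕ) (hk : k ≤ m) : (-(k : ZMod m)) = ((m - k : ℕ) : ZMod m) := by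
  have : ((m - k : ℕ) : ZMod m) = (m : ZMod m) - k := by
    push_cast [Nat.cast_sub hk]; ring
  rw [this, ZMod.natCast_self, zero_sub]

end

set_option maxHeartbeats 1600000 in
lemma countKite (t i : ℕ) (ht : 1 ≤ t) (hi1 : 1 ≤ i) (hi2 : i ≤ t) (g : ZMod (8*t+1)) :
    Multiset.count g (kiteDiffs ((2*i-1 : ℕ) : ZMod (8*t+1)) ((3*t+i : ℕ) : ZMod (8*t+1)) 0
      ((2*i : ℕ) : ZMod (8*t+1))) =
    if (2*i-1 = g.val ∨ 8*t+2-2*i = g.val ∨ 3*t+i = g.val ∨ 5*t+1-i = g.val ∨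
        2*i = g.val ∨ 8*t+1-2*i = g.val ∨ 5*t+i = g.val ∨ 3*t+1-i = g.val) then 1 else 0 := by
  have hna : (-(((2*i-1:ℕ)) : ZMod (8*t+1))) = ((8*t+2-2*i : ℕ) : ZMod (8*t+1)) := by
    rw [negCast _ (by omega), show 8*t+1-(2*i-1) = 8*t+2-2*i by omega]
  have hnb : (-(((3*t+i:ℕ)) : ZMod (8*t+1))) = ((5*t+1-i : ℕ) : ZMod (8*t+1)) := by
    rw [negCast _ (by omega), show 8*t+1-(3*t+i) = 5*t+1-i by omega]
  have hnd : (-(((2*i:ℕ)) : ZMod (8*t+1))) = ((8*t+1-2*i : ℕ) : ZMod (8*t+1)) := by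
    rw [negCast _ (by omega)]
  have hba : (((3*t+i:ℕ)) : ZMod (8*t+1)) - ((2*i-1:ℕ) : ZMod (8*t+1))
      = ((3*t+1-i : ℕ) : ZMod (8*t+1)) := by
    rw [← Nat.cast_sub (by omega), show 3*t+i-(2*i-1) = 3*t+1-i by omega]
  have hab : (((2*i-1:ℕ)) : ZMod (8*t+1)) - ((3*t+i:ℕ) : ZMod (8*t+1))
      = ((5*t+i : ℕ) : ZMod (8*t+1)) := by
    rw [show (((2*i-1:ℕ)) : ZMod (8*t+1)) - ((3*t+i:ℕ) : ZMod (8*t+1))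
      = -((((3*t+i:ℕ)) : ZMod (8*t+1)) - ((2*i-1:ℕ) : ZMod (8*t+1))) by ring, hba,
      negCast _ (by omega), show 8*t+1-(3*t+1-i) = 5*t+i by omega]
  have hm : kiteDiffs ((2*i-1 : ℕ) : ZMod (8*t+1)) ((3*t+i : ℕ) : ZMod (8*t+1)) 0
      ((2*i : ℕ) : ZMod (8*t+1)) =
      ({((8*t+2-2*i:ℕ):ZMod (8*t+1)), ((2*i-1:ℕ):ZMod (8*t+1)), ((5*t+1-i:ℕ):ZMod (8*t+1)),
        ((3*t+i:ℕ):ZMod (8*t+1)), ((8*t+1-2*i:ℕ):ZMod (8*t+1)), ((2*i:ℕ):ZMod (8*t+1)),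
        ((5*t+i:ℕ):ZMod (8*t+1)), ((3*t+1-i:ℕ):ZMod (8*t+1))} : Multiset (ZMod (8*t+1))) := by
    simp only [kiteDiffs, zero_sub, sub_zero, hna, hnb, hnd, hab, hba]
  rw [hm]
  simp only [Multiset.insert_eq_cons, Multiset.count_cons, Multiset.count_singleton]
  simp only [castEqIff g (8*t+2-2*i) (by omega : 8*t+2-2*i < 8*t+1),
    castEqIff g (2*i-1) (by omega : 2*i-1 < 8*t+1),
    castEqIff g (5*t+1-i) (by omega : 5*t+1-i < 8*t+1),
    castEqIff g (3*t+i) (by omega : 3*t+i < 8*t+1),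
    castEqIff g (8*t+1-2*i) (by omega : 8*t+1-2*i < 8*t+1),
    castEqIff g (2*i) (by omega : 2*i < 8*t+1),
    castEqIff g (5*t+i) (by omega : 5*t+i < 8*t+1),
    castEqIff g (3*t+1-i) (by omega : 3*t+1-i < 8*t+1)]
  split_ifs <;> omega

/-- `F = {[2i-1, 3t+i, 0 ⋈ 2i] : 1 ≤ i ≤ t}` is a
`(ℤ_{8t+1}, {0}, D, 1)`-difference family: each nonzero element of `ℤ_{8t+1}`
occurs exactly once among the differences. -/
theorem stmt13 (t : ℕ) (ht : 1 ≤ t) (g : ZMod (8 * t + 1)) (hg : g ≠ 0) :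
    Multiset.count g ((Finset.Icc 1 t).val.bind fun i =>
      kiteDiffs ((2 * i - 1 : ℕ) : ZMod (8 * t + 1))
        ((3 * t + i : ℕ) : ZMod (8 * t + 1)) 0 ((2 * i : ℕ) : ZMod (8 * t + 1))) = 1 := by
  classical
  haveI : NeZero (8 * t + 1) := ⟨by omega⟩
  set r := g.val with hrdef
  have hrlt : r < 8 * t + 1 := ZMod.val_lt g
  have hrpos : r ≠ 0 := by
    intro h
    apply hg
    rw [← ZMod.natCast_zmod_val g, ← hrdef, h, Nat.cast_zero]
  set P : ℕ → Prop := fun i => (2*i-1 = r ∨ 8*t+2-2*i = r ∨ 3*t+i = r ∨ 5*t+1-i = r ∨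
        2*i = r ∨ 8*t+1-2*i = r ∨ 5*t+i = r ∨ 3*t+1-i = r) with hP
  rw [Multiset.count_bind]
  have hmap : Multiset.map (fun i => Multiset.count g
      (kiteDiffs ((2 * i - 1 : ℕ) : ZMod (8 * t + 1))
        ((3 * t + i : ℕ) : ZMod (8 * t + 1)) 0 ((2 * i : ℕ) : ZMod (8 * t + 1))))
      (Finset.Icc 1 t).val
      = Multiset.map (fun i => if P i then 1 else 0) (Finset.Icc 1 t).val := by
    apply Multiset.map_congr rfl
    intro i hi
    rw [Finset.mem_val, Finset.mem_Icc] at hi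
    rw [countKite t i ht hi.1 hi.2 g]
  rw [hmap]
  have hsum : (Multiset.map (fun i => if P i then 1 else 0) (Finset.Icc 1 t).val).sum
      = ∑ i ∈ Finset.Icc 1 t, (if P i then 1 else 0) := rfl
  rw [hsum, ← Finset.card_filter]
  obtain ⟨i₀, hi₀⟩ : ∃ i, (1 ≤ i ∧ i ≤ t) ∧ P i := by
    rw [hP]
    rcases Nat.even_or_odd r with ⟨k, hk⟩ | ⟨k, hk⟩
    · by_cases h1 : r ≤ 2*t
      · exact ⟨k, by omega⟩
      · by_cases h2 : r ≤ 3*t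
        · exact ⟨3*t+1-r, by omega⟩
        · by_cases h3 : r ≤ 4*t
          · exact ⟨r-3*t, by omega⟩
          · by_cases h4 : r ≤ 5*t
            · exact ⟨5*t+1-r, by omega⟩
            · by_cases h5 : r ≤ 6*t
              · exact ⟨r-5*t, by omega⟩
              · exact ⟨4*t+1-k, by omega⟩
    · by_cases h1 : r ≤ 2*t
      · exact ⟨k+1, by omega⟩
      · by_cases h2 : r ≤ 3*t
        · exact ⟨3*t+1-r, by omega⟩
        · by_cases h3 : r ≤ 4*t
          · exact ⟨r-3*t, by omega⟩
          · by_cases h4 : r ≤ 5*t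
            · exact ⟨5*t+1-r, by omega⟩
            · by_cases h5 : r ≤ 6*t
              · exact ⟨r-5*t, by omega⟩
              · exact ⟨4*t-k, by omega⟩
  have hfilter : Finset.filter P (Finset.Icc 1 t) = {i₀} := by
    rw [Finset.eq_singleton_iff_unique_mem]
    constructor
    · rw [Finset.mem_filter, Finset.mem_Icc]
      exact ⟨⟨hi₀.1.1, hi₀.1.2⟩, hi₀.2⟩
    · intro j hj
      rw [Finset.mem_filter, Finset.mem_Icc] at hj
      have h1 := hj.2
      have h2 := hi₀.2
      rw [hP] at h1 h2
      have := hi₀.1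
      have := hj.1
      omega
  rw [hfilter, Finset.card_singleton]
end

section
/- For every odd integer m = 2n+1, the set F = { [(0,0),(0,2i),(2,i) ⋈ (1,0)], [(0,0),(4,i),(1,−i) ⋈ (6,i)] : i = 1,…,n } of kites with vertices in Z₈ × Z_m is a (Z₈ × Z_m, Z₈ × {0}, D, 1)-difference family, i.e., the multiset of differences of adjacent vertices covers each element of (Z₈ × Z_m) \ (Z₈ × {0}) exactly once and no element of Z₈ × {0} occurs. -/
open SimpleGraph

private lemma stmt14_key1 (n : ℕ) (z : ZMod (2 * n + 1)) (i : ℕ) (hi : i < 2 * n + 1) :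
    z = ((i : ℕ) : ZMod (2 * n + 1)) ↔ z.val = i := by
  haveI : NeZero (2 * n + 1) := ⟨Nat.succ_ne_zero _⟩
  constructor
  · rintro rfl; exact ZMod.val_cast_of_lt hi
  · rintro rfl; exact (ZMod.natCast_rightInverse z).symm

private lemma stmt14_key2 (n : ℕ) (y : ZMod (2 * n + 1)) (i : ℕ) (hi : i < 2 * n + 1) :
    y = -((i : ℕ) : ZMod (2 * n + 1)) ↔ (-y).val = i := by
  rw [← stmt14_key1 n (-y) i hi]
  constructor
  · rintro rfl; rw [neg_neg]
  · intro h; rw [← neg_neg y, h]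

private lemma stmt14_keyA (n : ℕ) (y : ZMod (2 * n + 1)) :
    (∑ i ∈ Finset.Icc 1 n, ((if y = ((i : ℕ) : ZMod (2 * n + 1)) then (1:ℕ) else 0) +
      (if y = -((i : ℕ) : ZMod (2 * n + 1)) then (1:ℕ) else 0))) =
    if y = 0 then 0 else 1 := by
  haveI : NeZero (2 * n + 1) := ⟨Nat.succ_ne_zero _⟩
  by_cases hy : y = 0
  · subst hy
    rw [if_pos rfl]
    apply Finset.sum_eq_zero
    intro i hi
    rw [Finset.mem_Icc] at hi
    have h1 : i < 2 * n + 1 := by omega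
    have ha : ¬ ((0 : ZMod (2*n+1)) = ((i:ℕ) : ZMod (2*n+1))) := by
      rw [stmt14_key1 n _ i h1, ZMod.val_zero]; omega
    have hb : ¬ ((0 : ZMod (2*n+1)) = -((i:ℕ) : ZMod (2*n+1))) := by
      rw [stmt14_key2 n _ i h1, neg_zero, ZMod.val_zero]; omega
    rw [if_neg ha, if_neg hb, add_zero]
  · rw [if_neg hy]
    have hvlt : y.val < 2 * n + 1 := ZMod.val_lt y
    have hv0 : y.val ≠ 0 := fun h => hy ((ZMod.val_eq_zero y).mp h)
    have hneg : (-y).val = 2 * n + 1 - y.val := by rw [ZMod.neg_val, if_neg hy]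
    rcases le_or_gt y.val n with h | h
    · rw [Finset.sum_eq_single_of_mem y.val (Finset.mem_Icc.mpr ⟨by omega, h⟩)]
      · rw [if_pos ((stmt14_key1 n y y.val hvlt).mpr rfl), if_neg, add_zero]
        intro hc; rw [stmt14_key2 n y _ hvlt, hneg] at hc; omega
      · intro i hi hne
        rw [Finset.mem_Icc] at hi
        have h1 : i < 2 * n + 1 := by omega
        have ha : ¬ (y = ((i:ℕ) : ZMod (2*n+1))) := by
          intro hc; exact hne ((stmt14_key1 n y i h1).mp hc).symm
        have hb : ¬ (y = -((i:ℕ) : ZMod (2*n+1))) := by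
          intro hc; rw [stmt14_key2 n y i h1, hneg] at hc; omega
        rw [if_neg ha, if_neg hb, add_zero]
    · rw [Finset.sum_eq_single_of_mem (2*n+1 - y.val)
          (Finset.mem_Icc.mpr ⟨by omega, by omega⟩)]
      · have hb : y = -(((2*n+1 - y.val : ℕ)) : ZMod (2*n+1)) :=
          (stmt14_key2 n y _ (by omega)).mpr hneg
        rw [if_pos hb, if_neg, zero_add]
        intro hc; have := (stmt14_key1 n y _ (by omega)).mp hc; omega
      · intro i hi hne
        rw [Finset.mem_Icc] at hi
        have h1 : i < 2 * n + 1 := by omega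
        have ha : ¬ (y = ((i:ℕ) : ZMod (2*n+1))) := by
          intro hc; have := (stmt14_key1 n y i h1).mp hc; omega
        have hb : ¬ (y = -((i:ℕ) : ZMod (2*n+1))) := by
          intro hc; rw [stmt14_key2 n y i h1, hneg] at hc; exact hne hc.symm
        rw [if_neg ha, if_neg hb, add_zero]

private lemma stmt14_keyA' (n : ℕ) (y : ZMod (2 * n + 1)) :
    (∑ i ∈ Finset.Icc 1 n, ((if y = -((i : ℕ) : ZMod (2 * n + 1)) then (1:ℕ) else 0) +
      (if y = ((i : ℕ) : ZMod (2 * n + 1)) then (1:ℕ) else 0))) =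
    if y = 0 then 0 else 1 := by
  rw [← stmt14_keyA n y]
  exact Finset.sum_congr rfl fun i _ => add_comm _ _

private lemma stmt14_keyB (n : ℕ) (y : ZMod (2 * n + 1)) :
    (∑ i ∈ Finset.Icc 1 n, ((if y = 2 * ((i : ℕ) : ZMod (2 * n + 1)) then (1:ℕ) else 0) +
      (if y = -(2 * ((i : ℕ) : ZMod (2 * n + 1))) then (1:ℕ) else 0))) =
    if y = 0 then 0 else 1 := by
  haveI : NeZero (2 * n + 1) := ⟨Nat.succ_ne_zero _⟩
  have hc2 : ∀ i : ℕ, 2 * ((i : ℕ) : ZMod (2 * n + 1)) = ((2 * i : ℕ) : ZMod (2 * n + 1)) := by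
    intro i; push_cast; ring
  simp only [hc2]
  by_cases hy : y = 0
  · subst hy
    rw [if_pos rfl]
    apply Finset.sum_eq_zero
    intro i hi
    rw [Finset.mem_Icc] at hi
    have h1 : 2 * i < 2 * n + 1 := by omega
    have ha : ¬ ((0 : ZMod (2*n+1)) = ((2*i : ℕ) : ZMod (2*n+1))) := by
      rw [stmt14_key1 n _ _ h1, ZMod.val_zero]; omega
    have hb : ¬ ((0 : ZMod (2*n+1)) = -((2*i : ℕ) : ZMod (2*n+1))) := by
      rw [stmt14_key2 n _ _ h1, neg_zero, ZMod.val_zero]; omega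
    rw [if_neg ha, if_neg hb, add_zero]
  · rw [if_neg hy]
    have hvlt : y.val < 2 * n + 1 := ZMod.val_lt y
    have hv0 : y.val ≠ 0 := fun h => hy ((ZMod.val_eq_zero y).mp h)
    have hneg : (-y).val = 2 * n + 1 - y.val := by rw [ZMod.neg_val, if_neg hy]
    rcases Nat.even_or_odd y.val with ⟨k, hk⟩ | ⟨k, hk⟩
    · -- y.val = 2k, use i₀ = k
      rw [Finset.sum_eq_single_of_mem k (Finset.mem_Icc.mpr ⟨by omega, by omega⟩)]
      · rw [if_pos ((stmt14_key1 n y (2*k) (by omega)).mpr (by omega)), if_neg, add_zero]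
        intro hc; rw [stmt14_key2 n y _ (by omega), hneg] at hc; omega
      · intro i hi hne
        rw [Finset.mem_Icc] at hi
        have h1 : 2 * i < 2 * n + 1 := by omega
        have ha : ¬ (y = ((2*i:ℕ) : ZMod (2*n+1))) := by
          intro hc; have := (stmt14_key1 n y _ h1).mp hc; omega
        have hb : ¬ (y = -((2*i:ℕ) : ZMod (2*n+1))) := by
          intro hc; rw [stmt14_key2 n y _ h1, hneg] at hc; omega
        rw [if_neg ha, if_neg hb, add_zero]
    · -- y.val = 2k+1, use i₀ = n - k
      rw [Finset.sum_eq_single_of_mem (n - k) (Finset.mem_Icc.mpr ⟨by omega, by omega⟩)]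
      · have hb : y = -(((2*(n-k) : ℕ)) : ZMod (2*n+1)) :=
          (stmt14_key2 n y _ (by omega)).mpr (by omega)
        rw [if_pos hb, if_neg, zero_add]
        intro hc; have := (stmt14_key1 n y _ (by omega)).mp hc; omega
      · intro i hi hne
        rw [Finset.mem_Icc] at hi
        have h1 : 2 * i < 2 * n + 1 := by omega
        have ha : ¬ (y = ((2*i:ℕ) : ZMod (2*n+1))) := by
          intro hc; have := (stmt14_key1 n y _ h1).mp hc; omega
        have hb : ¬ (y = -((2*i:ℕ) : ZMod (2*n+1))) := by
          intro hc; rw [stmt14_key2 n y _ h1, hneg] at hc; omega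
        rw [if_neg ha, if_neg hb, add_zero]

private lemma stmt14_keyB' (n : ℕ) (y : ZMod (2 * n + 1)) :
    (∑ i ∈ Finset.Icc 1 n, ((if y = -(2 * ((i : ℕ) : ZMod (2 * n + 1))) then (1:ℕ) else 0) +
      (if y = 2 * ((i : ℕ) : ZMod (2 * n + 1)) then (1:ℕ) else 0))) =
    if y = 0 then 0 else 1 := by
  rw [← stmt14_keyB n y]
  exact Finset.sum_congr rfl fun i _ => add_comm _ _

set_option maxHeartbeats 1000000 in
/-- For odd `m = 2n+1`, the family
`{[(0,0),(0,2i),(2,i) ⋈ (1,0)], [(0,0),(4,i),(1,-i) ⋈ (6,i)] : 1 ≤ i ≤ n}`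
is a `(ℤ₈ × ℤ_m, ℤ₈ × {0}, D, 1)`-difference family: every element outside
`ℤ₈ × {0}` occurs exactly once among the differences, and no element of
`ℤ₈ × {0}` occurs. -/
theorem stmt14 (n : ℕ) (g : ZMod 8 × ZMod (2 * n + 1)) :
    Multiset.count g ((Finset.Icc 1 n).val.bind fun i =>
      kiteDiffs ((0, 0) : ZMod 8 × ZMod (2 * n + 1))
          (0, ((2 * i : ℕ) : ZMod (2 * n + 1))) (2, ((i : ℕ) : ZMod (2 * n + 1))) (1, 0) +
      kiteDiffs ((0, 0) : ZMod 8 × ZMod (2 * n + 1))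
          (4, ((i : ℕ) : ZMod (2 * n + 1))) (1, -((i : ℕ) : ZMod (2 * n + 1)))
          (6, ((i : ℕ) : ZMod (2 * n + 1)))) =
      if g.2 = 0 then 0 else 1 := by
  obtain ⟨x, y⟩ := g
  rw [Multiset.count_bind]
  rw [show ((Finset.Icc 1 n).val.map _).sum = ∑ i ∈ Finset.Icc 1 n, _ from rfl]
  have h1 : ∀ a : ZMod (2*n+1), 2*a - a = a := fun a => by ring
  have h2 : ∀ a : ZMod (2*n+1), a - 2*a = -a := fun a => by ring
  have h3 : ∀ a : ZMod (2*n+1), a - -a = 2*a := fun a => by ring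
  have h4 : ∀ a : ZMod (2*n+1), -a - a = -(2*a) := fun a => by ring
  simp only [kiteDiffs, Multiset.count_add, Multiset.insert_eq_cons, Multiset.count_cons,
    Multiset.count_singleton, Prod.mk_sub_mk, sub_zero, zero_sub, Prod.mk.injEq, neg_neg,
    Nat.cast_mul, Nat.cast_ofNat, sub_self, neg_zero, h1, h2, h3, h4,
    show (1:ZMod 8)-2 = 7 from by decide, show (2:ZMod 8)-1 = 1 from by decide,
    show (6:ZMod 8)-1 = 5 from by decide, show (1:ZMod 8)-6 = 3 from by decide,
    show (4:ZMod 8)-1 = 3 from by decide, show (1:ZMod 8)-4 = 5 from by decide,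
    show -(2:ZMod 8) = 6 from by decide, show -(4:ZMod 8) = 4 from by decide,
    show -(1:ZMod 8) = 7 from by decide]
  rcases (show x = 0 ∨ x = 1 ∨ x = 2 ∨ x = 3 ∨ x = 4 ∨ x = 5 ∨ x = 6 ∨ x = 7 by revert x; decide) with rfl | rfl | rfl | rfl | rfl | rfl | rfl | rfl <;>
    · simp (config := { decide := true }) [-Finset.sum_boole]
      first
        | exact stmt14_keyA n y
        | exact stmt14_keyA' n y
        | exact stmt14_keyB n y
        | exact stmt14_keyB' n y
end

section
/- If a (K_v,P₄)-design B can be down-linked to a (K_n,P₃)-design, then n ≥ v−1. -/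
open SimpleGraph

/-- A down-link from a `(K_v,P₄)`-design to a `(K_n,P₃)`-design forces
`n ≥ v - 1`. -/
theorem stmt16 (v n : ℕ) (D D' : Set (SimpleGraph ℕ))
    (hD : IsDesign (Kon (Set.Iio v)) (pathGraph 4) D)
    (hD' : IsDesign (Kon (Set.Iio n)) (pathGraph 3) D')
    (f : SimpleGraph ℕ → SimpleGraph ℕ) (hf : IsDownlink D D' f) :
    v - 1 ≤ n := by
  by_contra hcon
  push_neg at hcon
  have hv : n + 1 < v := by omega
  -- the edge {n, n+1} is in K_v
  have hadj : (Kon (Set.Iio v)).Adj n (n + 1) :=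
    ⟨by omega, by simp only [Set.mem_Iio]; omega, by simp only [Set.mem_Iio]; omega⟩
  obtain ⟨B, ⟨hBD, hBe⟩, -⟩ := hD.2 s(n, n + 1) (by rwa [SimpleGraph.mem_edgeSet])
  have hBadj : B.Adj n (n + 1) := hBe
  obtain ⟨-, ⟨ψ, hψ⟩, -⟩ := hD.1 B hBD
  obtain ⟨hfD', hfle⟩ := hf B hBD
  obtain ⟨hfKn, ⟨φ, hφ⟩, -⟩ := hD'.1 (f B) hfD'
  -- the two edges of the P₃-block f B
  have h01 : (f B).Adj (φ 0) (φ 1) :=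
    (hφ _ _).2 ⟨0, 1, by rw [pathGraph_adj]; left; rfl, rfl, rfl⟩
  have h12 : (f B).Adj (φ 1) (φ 2) :=
    (hφ _ _).2 ⟨1, 2, by rw [pathGraph_adj]; left; rfl, rfl, rfl⟩
  -- all vertices of f B lie below n
  have hn0 : φ 0 < n := (hfKn h01).2.1
  have hn1 : φ 1 < n := (hfKn h01).2.2
  have hn2 : φ 2 < n := (hfKn h12).2.2
  -- f B is a subgraph of B
  have hB01 : B.Adj (φ 0) (φ 1) := hfle h01
  have hB12 : B.Adj (φ 1) (φ 2) := hfle h12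
  -- pull everything back along ψ
  obtain ⟨a, b, hab, ha, hb⟩ := (hψ _ _).1 hBadj
  obtain ⟨c0, c1, -, hc0, hc1⟩ := (hψ _ _).1 hB01
  obtain ⟨c1', c2, -, hc1', hc2⟩ := (hψ _ _).1 hB12
  have hab' : a ≠ b := hab.ne
  have h01' : c0 ≠ c1 := fun h =>
    (φ.injective.ne (by decide : (0 : Fin 3) ≠ 1)) (by rw [← hc0, ← hc1, h])
  have h02' : c0 ≠ c2 := fun h =>
    (φ.injective.ne (by decide : (0 : Fin 3) ≠ 2)) (by rw [← hc0, ← hc2, h])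
  have h12' : c1 ≠ c2 := fun h =>
    (φ.injective.ne (by decide : (1 : Fin 3) ≠ 2)) (by rw [← hc1, ← hc2, h])
  have pig : ∀ a b c0 c1 c2 : Fin 4, a ≠ b → c0 ≠ c1 → c0 ≠ c2 → c1 ≠ c2 →
      a = c0 ∨ a = c1 ∨ a = c2 ∨ b = c0 ∨ b = c1 ∨ b = c2 := by decide
  rcases pig a b c0 c1 c2 hab' h01' h02' h12' with h | h | h | h | h | h <;>
    subst h <;> omega
end
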